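/- arXiv:2012.10370 — 4 statements merged into one kernel-verified Lean document; each statement's English description precedes it below -/
import Mathlib

section
/- Let μ(dx) = 2x·1_{[0,1]}(x)dx. For u ∈ (0,1) set ν_u = (u/3)δ₀ + ((1+√u)/3)δ_{√u} + ((2−√u−u)/3)δ₁. Then each ν_u dominates μ in the convex order, ∫y² ν_u(dy) = (2 + u^{3/2} − √u)/3, and inf over ν ∈ P_{≥μ}(ℝ,3) of ∫y² ν(dy) equals inf over u ∈ (0,1) of ∫y² ν_u(dy), attained at u = 1/3; hence d_{2,3}(μ)² = 1/6 − 2/3^{5/2}. -/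
open MeasureTheory Set

noncomputable section

abbrev Ed (d : ℕ) := EuclideanSpace ℝ (Fin d)

variable {E : Type*} [NormedAddCommGroup E] [NormedSpace ℝ E] [MeasurableSpace E] [BorelSpace E]

/-- A coupling between `μ` and `ν`. -/
def IsCoupling (π : Measure (E × E)) (μ ν : Measure E) : Prop :=
  π.map Prod.fst = μ ∧ π.map Prod.snd = ν

/-- A martingale coupling between `μ` and `ν` : a probability coupling such that the
conditional expectation of the second coordinate given the first is the first. -/
def IsMartingaleCoupling (π : Measure (E × E)) (μ ν : Measure E) : Prop :=
  IsProbabilityMeasure π ∧ IsCoupling π μ ν ∧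
    ∀ A : Set E, MeasurableSet A →
      ∫ q in A ×ˢ (univ : Set E), (q.2 - q.1) ∂π = 0

/-- The convex order `μ ≤_cvx ν`. -/
def ConvexOrder (μ ν : Measure E) : Prop :=
  ∀ φ : E → ℝ, ConvexOn ℝ univ φ → Integrable φ μ → Integrable φ ν →
    ∫ x, φ x ∂μ ≤ ∫ x, φ x ∂ν

/-- The `p`-th power transport cost of a coupling. -/
def pCost (p : ℝ) (π : Measure (E × E)) : ℝ := ∫ q, ‖q.2 - q.1‖ ^ p ∂π

/-- `W_p(μ,ν)^p`. -/
def WpPow (p : ℝ) (μ ν : Measure E) : ℝ :=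
  sInf {c | ∃ π : Measure (E × E), IsProbabilityMeasure π ∧ IsCoupling π μ ν ∧ c = pCost p π}

/-- The Wasserstein distance `W_p(μ,ν)`. -/
def Wp (p : ℝ) (μ ν : Measure E) : ℝ := WpPow p μ ν ^ (1 / p)

/-- `M_p(μ,ν)^p` : the martingale transport cost. -/
def MpPow (p : ℝ) (μ ν : Measure E) : ℝ :=
  sInf {c | ∃ π : Measure (E × E), IsMartingaleCoupling π μ ν ∧ c = pCost p π}

/-- `M_p(μ,ν)`. -/
def Mp (p : ℝ) (μ ν : Measure E) : ℝ := MpPow p μ ν ^ (1 / p)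

/-- A Borel nearest-neighbour projection onto the finite set `Γ`. -/
def IsNearestProj (Γ : Finset E) (f : E → E) : Prop :=
  Measurable f ∧ ∀ x, f x ∈ Γ ∧ ‖x - f x‖ = Metric.infDist x (Γ : Set E)

/-- `e_p(Γ,μ)^p`, the `p`-th power quantization error on the grid `Γ`. -/
def quantErrPow (p : ℝ) (Γ : Finset E) (μ : Measure E) : ℝ :=
  ∫ x, Metric.infDist x (Γ : Set E) ^ p ∂μ

/-- `Γ` is an `L^p`-optimal `N`-quantizer of `μ`. -/
def IsOptimalQuantizer (p : ℝ) (N : ℕ) (Γ : Finset E) (μ : Measure E) : Prop :=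
  Γ.Nonempty ∧ Γ.card ≤ N ∧
    ∀ Γ' : Finset E, Γ'.Nonempty → Γ'.card ≤ N → quantErrPow p Γ μ ≤ quantErrPow p Γ' μ

/-- `ν` is supported on at most `N` points. -/
def SuppLE (N : ℕ) (ν : Measure E) : Prop :=
  ∃ s : Finset E, s.card ≤ N ∧ ν ((s : Set E)ᶜ) = 0

/-- The measure `μ(dx) = 2x 1_{[0,1]}(x) dx`. -/
def muTri : Measure ℝ :=
  (volume.restrict (Icc (0:ℝ) 1)).withDensity fun x => ENNReal.ofReal (2 * x)

/-- The three-point measures `ν_u`. -/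
def nuTri (u : ℝ) : Measure ℝ :=
  ENNReal.ofReal (u / 3) • Measure.dirac (0:ℝ) +
    ENNReal.ofReal ((1 + Real.sqrt u) / 3) • Measure.dirac (Real.sqrt u) +
    ENNReal.ofReal ((2 - Real.sqrt u - u) / 3) • Measure.dirac (1:ℝ)

section Aux
open scoped NNReal ENNReal
open scoped NNReal ENNReal


lemma meas_den : Measurable fun x : ℝ => ENNReal.ofReal (2 * x) := by fun_prop

lemma muTri_int (f : ℝ → ℝ) : ∫ x, f x ∂muTri = ∫ x in (0:ℝ)..1, f x * (2*x) := by
  have hd : (fun x : ℝ => ENNReal.ofReal (2 * x)) = fun x => (((2*x).toNNReal : ℝ≥0) : ℝ≥0∞) := rfl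
  have hm : Measurable fun x : ℝ => (2*x).toNNReal := by fun_prop
  rw [muTri, hd, integral_withDensity_eq_integral_smul hm]
  rw [intervalIntegral.integral_of_le (by norm_num : (0:ℝ) ≤ 1),
    ← integral_Icc_eq_integral_Ioc]
  refine setIntegral_congr_fun measurableSet_Icc fun x hx => ?_
  have h2 : (0:ℝ) ≤ 2*x := by linarith [hx.1]
  simp only [NNReal.smul_def, Real.coe_toNNReal _ h2, smul_eq_mul]
  ring

lemma muTri_integrable {f : ℝ → ℝ} (hf : Continuous f) : Integrable f muTri := by
  rw [muTri, integrable_withDensity_iff meas_den (ae_of_all _ fun x => ENNReal.ofReal_lt_top)]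
  have h : (fun x : ℝ => f x * (ENNReal.ofReal (2*x)).toReal)
      = fun x => f x * max (2*x) 0 := by
    ext x; rw [ENNReal.toReal_ofReal']
  rw [h]
  exact (hf.mul ((continuous_const.mul continuous_id).max continuous_const)).integrableOn_Icc


lemma sqrt_le_one {u : ℝ} (hu : u ∈ Ioo (0:ℝ) 1) : Real.sqrt u ≤ 1 := by
  rw [show (1:ℝ) = Real.sqrt 1 by simp]
  exact Real.sqrt_le_sqrt hu.2.le

lemma nuTri_prob {u : ℝ} (hu : u ∈ Ioo (0:ℝ) 1) : IsProbabilityMeasure (nuTri u) := by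
  have hs : Real.sqrt u ≤ 1 := sqrt_le_one hu
  have hs0 : 0 ≤ Real.sqrt u := Real.sqrt_nonneg u
  constructor
  simp only [nuTri, Measure.add_apply, Measure.smul_apply, measure_univ, smul_eq_mul, mul_one]
  rw [← ENNReal.ofReal_add (by linarith [hu.1.le]) (by linarith),
      ← ENNReal.ofReal_add (by linarith [hu.1.le, hu.2.le]) (by nlinarith [hu.2.le])]
  rw [show u/3 + (1 + Real.sqrt u)/3 + (2 - Real.sqrt u - u)/3 = 1 by ring]
  simp

lemma integrable_dirac'' {f : ℝ → ℝ} (hf : Measurable f) (a : ℝ) :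
    Integrable f (Measure.dirac a) := by
  refine ⟨hf.aestronglyMeasurable, ?_⟩
  rw [HasFiniteIntegral, lintegral_dirac' _ (by fun_prop)]
  exact ENNReal.coe_lt_top

lemma nuTri_integrable {u : ℝ} (f : ℝ → ℝ) (hf : Measurable f) : Integrable f (nuTri u) := by
  refine Integrable.add_measure (Integrable.add_measure ?_ ?_) ?_ <;>
    exact (integrable_dirac'' hf _).smul_measure ENNReal.ofReal_ne_top

lemma nuTri_int {u : ℝ} (hu : u ∈ Ioo (0:ℝ) 1) (f : ℝ → ℝ) (hf : Measurable f) :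
    ∫ y, f y ∂(nuTri u) = (u/3) * f 0 + ((1 + Real.sqrt u)/3) * f (Real.sqrt u)
      + ((2 - Real.sqrt u - u)/3) * f 1 := by
  have hs : Real.sqrt u ≤ 1 := sqrt_le_one hu
  have hs0 : 0 ≤ Real.sqrt u := Real.sqrt_nonneg u
  rw [nuTri, integral_add_measure (((integrable_dirac'' hf _).smul_measure
      ENNReal.ofReal_ne_top).add_measure ((integrable_dirac'' hf _).smul_measure
      ENNReal.ofReal_ne_top)) ((integrable_dirac'' hf _).smul_measure ENNReal.ofReal_ne_top),
    integral_add_measure ((integrable_dirac'' hf _).smul_measure ENNReal.ofReal_ne_top)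
      ((integrable_dirac'' hf _).smul_measure ENNReal.ofReal_ne_top)]
  simp only [integral_smul_measure, integral_dirac, smul_eq_mul]
  rw [ENNReal.toReal_ofReal (by linarith [hu.1.le]), ENNReal.toReal_ofReal (by linarith),
    ENNReal.toReal_ofReal (by nlinarith [hu.2.le])]

lemma integrable_of_finsupp {ν : Measure ℝ} [IsFiniteMeasure ν] {s : Finset ℝ}
    (hns : ν ((s : Set ℝ))ᶜ = 0) {f : ℝ → ℝ} (hf : Measurable f) : Integrable f ν := by
  refine ⟨hf.aestronglyMeasurable, ?_⟩
  rw [HasFiniteIntegral]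
  have hmeas : MeasurableSet (s : Set ℝ) := s.measurableSet
  rw [← lintegral_add_compl _ hmeas, setLIntegral_measure_zero _ _ hns, add_zero,
    lintegral_finset]
  exact ENNReal.sum_lt_top.mpr fun a _ => ENNReal.mul_lt_top ENNReal.coe_lt_top (measure_lt_top ν _)

lemma cvx_cont {f : ℝ → ℝ} (h : ConvexOn ℝ univ f) : Continuous f := by
  have := h.continuousOn isOpen_univ
  rwa [← continuousOn_univ]

lemma poly_int (a b α β : ℝ) :
    ∫ x in a..b, (α*x + β)*(2*x) = 2*α*(b^3 - a^3)/3 + β*(b^2 - a^2) := by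
  have h : ∀ x : ℝ, (α*x + β)*(2*x) = (2*α)*x^2 + (2*β)*x := fun x => by ring
  simp only [h]
  rw [intervalIntegral.integral_add (((continuous_pow 2).intervalIntegrable a b).const_mul _)
      (((continuous_id'.intervalIntegrable a b) : IntervalIntegrable (fun x : ℝ => x) _ a b).const_mul _),
    intervalIntegral.integral_const_mul, intervalIntegral.integral_const_mul,
    integral_pow, integral_id]
  ring


lemma nuTri_convexOrder {u : ℝ} (hu : u ∈ Ioo (0:ℝ) 1) : ConvexOrder muTri (nuTri u) := by
  intro φ hφ hφμ hφν
  have hcont : Continuous φ := cvx_cont hφ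
  set s := Real.sqrt u with hs_def
  have hs0 : 0 < s := Real.sqrt_pos.mpr hu.1
  have hs1 : s < 1 := by
    nlinarith [Real.sq_sqrt hu.1.le, Real.sqrt_nonneg u, hu.2]
  have hsu : s^2 = u := Real.sq_sqrt hu.1.le
  have hsne : s ≠ 0 := ne_of_gt hs0
  have hs1ne : (1:ℝ) - s ≠ 0 := by intro h; exact absurd (by linarith : s = 1) (ne_of_lt hs1)
  have key1 : ∀ x ∈ Icc (0:ℝ) s, φ x ≤ ((φ s - φ 0)/s)*x + φ 0 := by
    intro x hx
    have h := hφ.2 (mem_univ (0:ℝ)) (mem_univ s)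
      (div_nonneg (by linarith [hx.2] : (0:ℝ) ≤ s - x) hs0.le)
      (div_nonneg hx.1 hs0.le)
      (by field_simp; ring : (s-x)/s + x/s = 1)
    rw [smul_eq_mul, smul_eq_mul, smul_eq_mul, smul_eq_mul,
      show ((s-x)/s)*0 + (x/s)*s = x by field_simp; ring] at h
    calc φ x ≤ ((s-x)/s)*φ 0 + (x/s)*φ s := h
      _ = ((φ s - φ 0)/s)*x + φ 0 := by field_simp; ring
  have key2 : ∀ x ∈ Icc s 1, φ x ≤ ((φ 1 - φ s)/(1-s))*x + (φ s - s*((φ 1 - φ s)/(1-s))) := by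
    intro x hx
    have h := hφ.2 (mem_univ s) (mem_univ (1:ℝ))
      (div_nonneg (by linarith [hx.2] : (0:ℝ) ≤ 1 - x) (by linarith))
      (div_nonneg (by linarith [hx.1]) (by linarith))
      (by field_simp [hs1ne]; ring : (1-x)/(1-s) + (x-s)/(1-s) = 1)
    rw [smul_eq_mul, smul_eq_mul, smul_eq_mul, smul_eq_mul,
      show ((1-x)/(1-s))*s + ((x-s)/(1-s))*1 = x by field_simp [hs1ne]; ring] at h
    calc φ x ≤ ((1-x)/(1-s))*φ s + ((x-s)/(1-s))*φ 1 := h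
      _ = ((φ 1 - φ s)/(1-s))*x + (φ s - s*((φ 1 - φ s)/(1-s))) := by field_simp [hs1ne]; ring
  have hI1 : IntervalIntegrable (fun x => φ x * (2*x)) volume 0 s :=
    (hcont.mul (continuous_const.mul continuous_id')).intervalIntegrable _ _
  have hI2 : IntervalIntegrable (fun x => φ x * (2*x)) volume s 1 :=
    (hcont.mul (continuous_const.mul continuous_id')).intervalIntegrable _ _
  have lin_ii : ∀ α β : ℝ, ∀ a b : ℝ, IntervalIntegrable (fun x => (α*x + β)*(2*x)) volume a b :=
    fun α β a b => (((continuous_const.mul continuous_id').add continuous_const).mul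
      (continuous_const.mul continuous_id')).intervalIntegrable _ _
  have b1 : ∫ x in (0:ℝ)..s, φ x * (2*x)
      ≤ ∫ x in (0:ℝ)..s, (((φ s - φ 0)/s)*x + φ 0)*(2*x) := by
    apply intervalIntegral.integral_mono_on hs0.le hI1 (lin_ii _ _ _ _)
    intro x hx
    have h2 : (0:ℝ) ≤ 2*x := by linarith [hx.1]
    exact mul_le_mul_of_nonneg_right (key1 x hx) h2
  have b2 : ∫ x in s..1, φ x * (2*x)
      ≤ ∫ x in s..1, (((φ 1 - φ s)/(1-s))*x + (φ s - s*((φ 1 - φ s)/(1-s))))*(2*x) := by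
    apply intervalIntegral.integral_mono_on hs1.le hI2 (lin_ii _ _ _ _)
    intro x hx
    have h2 : (0:ℝ) ≤ 2*x := by linarith [hx.1, hs0.le]
    exact mul_le_mul_of_nonneg_right (key2 x hx) h2
  rw [muTri_int φ, ← intervalIntegral.integral_add_adjacent_intervals hI1 hI2,
    nuTri_int hu φ hcont.measurable]
  calc (∫ x in (0:ℝ)..s, φ x * (2*x)) + ∫ x in s..1, φ x * (2*x)
      ≤ (∫ x in (0:ℝ)..s, (((φ s - φ 0)/s)*x + φ 0)*(2*x))
        + ∫ x in s..1, (((φ 1 - φ s)/(1-s))*x + (φ s - s*((φ 1 - φ s)/(1-s))))*(2*x) :=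
        add_le_add b1 b2
    _ = (u/3) * φ 0 + ((1 + s)/3) * φ s + ((2 - s - u)/3) * φ 1 := by
        rw [poly_int, poly_int, ← hsu]
        field_simp [hsne, hs1ne]
        ring

lemma convexOn_affine (α β : ℝ) : ConvexOn ℝ univ (fun y : ℝ => α*y+β) :=
  ⟨convex_univ, fun x _ y _ a b _ _ hab => by
    simp only [smul_eq_mul]
    refine le_of_eq ?_
    have hb1 : b = 1 - a := by linarith
    rw [hb1]; ring⟩

lemma convexOn_affine_max (α β γ δ : ℝ) :
    ConvexOn ℝ univ (fun y : ℝ => max (α*y+β) (γ*y+δ)) :=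
  (convexOn_affine α β).sup (convexOn_affine γ δ)

-- positivity of interval integral lower bound piece
example : True := trivial

lemma psi_plus_pos {t : ℝ} (ht : t < 1) : 0 < ∫ x in (0:ℝ)..1, max (x - t) 0 * (2*x) := by
  set c : ℝ := (max t 0 + 1)/2 with hc
  have hc0 : 0 < c := by have := le_max_right t 0; simp only [hc]; linarith
  have hct : t < c := by have := le_max_left t 0; have := le_max_right t 0; simp only [hc]
                         rcases le_or_gt t 0 with h|h
                         · rw [max_eq_right h]; linarith
                         · rw [max_eq_left h.le]; linarith
  have hc1 : c < 1 := by have : max t 0 < 1 := by rcases le_or_gt t 0 with h|h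
                                                  · rw [max_eq_right h]; norm_num
                                                  · rw [max_eq_left h.le]; exact ht
                         simp only [hc]; linarith
  have hcont : Continuous fun x : ℝ => max (x - t) 0 * (2*x) := by
    exact (((continuous_id'.sub continuous_const).max continuous_const).mul
      (continuous_const.mul continuous_id'))
  rw [← intervalIntegral.integral_add_adjacent_intervals (b := c)
    (hcont.intervalIntegrable _ _) (hcont.intervalIntegrable _ _)]
  have h1 : 0 ≤ ∫ x in (0:ℝ)..c, max (x - t) 0 * (2*x) := by
    apply intervalIntegral.integral_nonneg hc0.le
    intro x hx
    have : 0 ≤ 2*x := by linarith [hx.1]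
    positivity
  have h2 : 0 < ∫ x in c..1, max (x - t) 0 * (2*x) := by
    apply intervalIntegral.intervalIntegral_pos_of_pos_on (hcont.intervalIntegrable _ _) _ hc1
    intro x hx
    have h1 : 0 < x - t := by linarith [hx.1]
    have h2 : 0 < 2*x := by linarith [hx.1, hc0]
    rw [max_eq_left h1.le]
    positivity
  linarith

lemma psi_minus_pos {t : ℝ} (ht : 0 < t) : 0 < ∫ x in (0:ℝ)..1, max (t - x) 0 * (2*x) := by
  set c : ℝ := (min t 1)/2 with hc
  have hmin : 0 < min t 1 := lt_min ht one_pos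
  have hmin1 : min t 1 ≤ 1 := min_le_right _ _
  have hc0 : 0 < c := by positivity
  have hc1 : c < 1 := by simp only [hc]; linarith
  have hct : c < t := by have := min_le_left t 1; simp only [hc]; linarith
  have hcont : Continuous fun x : ℝ => max (t - x) 0 * (2*x) := by
    exact (((continuous_const.sub continuous_id').max continuous_const).mul
      (continuous_const.mul continuous_id'))
  rw [← intervalIntegral.integral_add_adjacent_intervals (b := c)
    (hcont.intervalIntegrable _ _) (hcont.intervalIntegrable _ _)]
  have h2 : 0 ≤ ∫ x in c..1, max (t - x) 0 * (2*x) := by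
    apply intervalIntegral.integral_nonneg hc1.le
    intro x hx
    have : 0 ≤ 2*x := by linarith [hx.1, hc0]
    positivity
  have h1 : 0 < ∫ x in (0:ℝ)..c, max (t - x) 0 * (2*x) := by
    apply intervalIntegral.intervalIntegral_pos_of_pos_on (hcont.intervalIntegrable _ _) _ hc0
    intro x hx
    have ha : 0 < t - x := by linarith [hx.2]
    have hb : 0 < 2*x := by linarith [hx.1]
    rw [max_eq_left ha.le]
    positivity
  linarith


lemma exists_nonpos {ν : Measure ℝ} [IsProbabilityMeasure ν] {s : Finset ℝ}
    (hν : ν ((s : Set ℝ))ᶜ = 0) (hco : ConvexOrder muTri ν) : ∃ a ∈ s, a ≤ 0 := by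
  by_contra h
  push_neg at h
  rcases s.eq_empty_or_nonempty with rfl | hne
  · simp at hν
  · set t := min 1 (s.min' hne) with ht_def
    have ht0 : 0 < t := lt_min one_pos (h _ (s.min'_mem hne))
    set φ : ℝ → ℝ := fun y => max (t - y) 0 with hφ_def
    have hφc : ConvexOn ℝ univ φ := by
      have h0 := convexOn_affine_max (-1) t 0 0
      have he : (fun y : ℝ => max ((-1)*y+t) (0*y+0)) = φ := by
        funext y; simp [hφ_def]; ring_nf
      rwa [he] at h0
    have hmeas : Measurable φ := ((measurable_const.sub measurable_id).max measurable_const)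
    have hcont : Continuous φ := ((continuous_const.sub continuous_id').max continuous_const)
    have hν0 : ∫ y, φ y ∂ν = 0 := by
      have hae : φ =ᵐ[ν] 0 := by
        refine measure_mono_null (fun y hy => ?_) hν
        simp only [mem_compl_iff]
        intro hys
        apply hy
        have : t ≤ y := le_trans (min_le_right _ _) (s.min'_le _ hys)
        simp [hφ_def]
        linarith
      rw [integral_congr_ae hae]; simp
    have hle := hco φ hφc (muTri_integrable hcont) (integrable_of_finsupp hν hmeas)
    rw [hν0, muTri_int] at hle
    exact absurd hle (not_le.mpr (psi_minus_pos ht0))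

lemma exists_ge_one {ν : Measure ℝ} [IsProbabilityMeasure ν] {s : Finset ℝ}
    (hν : ν ((s : Set ℝ))ᶜ = 0) (hco : ConvexOrder muTri ν) : ∃ c ∈ s, 1 ≤ c := by
  by_contra h
  push_neg at h
  rcases s.eq_empty_or_nonempty with rfl | hne
  · simp at hν
  · set t := max 0 (s.max' hne) with ht_def
    have ht1 : t < 1 := max_lt one_pos (h _ (s.max'_mem hne))
    set φ : ℝ → ℝ := fun y => max (y - t) 0 with hφ_def
    have hφc : ConvexOn ℝ univ φ := by
      have h0 := convexOn_affine_max 1 (-t) 0 0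
      have he : (fun y : ℝ => max (1*y+(-t)) (0*y+0)) = φ := by
        funext y; simp [hφ_def]; ring_nf
      rwa [he] at h0
    have hmeas : Measurable φ := ((measurable_id.sub measurable_const).max measurable_const)
    have hcont : Continuous φ := ((continuous_id'.sub continuous_const).max continuous_const)
    have hν0 : ∫ y, φ y ∂ν = 0 := by
      have hae : φ =ᵐ[ν] 0 := by
        refine measure_mono_null (fun y hy => ?_) hν
        simp only [mem_compl_iff]
        intro hys
        apply hy
        have : y ≤ t := le_trans (s.le_max' _ hys) (le_max_right _ _)
        simp [hφ_def]
        linarith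
      rw [integral_congr_ae hae]; simp
    have hle := hco φ hφc (muTri_integrable hcont) (integrable_of_finsupp hν hmeas)
    rw [hν0, muTri_int] at hle
    exact absurd hle (not_le.mpr (psi_plus_pos ht1))

open Classical in
lemma middle {s : Finset ℝ} (hcard : s.card ≤ 3) (ha : ∃ a ∈ s, a ≤ 0)
    (hc : ∃ c ∈ s, 1 ≤ c) :
    ∃ b ∈ Ioo (0:ℝ) 1, ∀ x ∈ s, x ∈ Ioo (0:ℝ) 1 → x = b := by
  obtain ⟨a, has, ha0⟩ := ha
  obtain ⟨c, hcs, hc1⟩ := hc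
  have hac : a ≠ c := fun h => by rw [h] at ha0; linarith
  set s' := s.filter (fun x => x ∈ Ioo (0:ℝ) 1) with hs'
  have hsub : s' ⊆ (s.erase a).erase c := by
    intro x hx
    rw [Finset.mem_filter] at hx
    obtain ⟨hxs, hxi⟩ := hx
    refine Finset.mem_erase.mpr ⟨fun h => ?_, Finset.mem_erase.mpr ⟨fun h => ?_, hxs⟩⟩
    · rw [h] at hxi; exact absurd hxi.2 (not_lt.mpr hc1)
    · rw [h] at hxi; exact absurd hxi.1 (not_lt.mpr ha0)
  have hcard' : s'.card ≤ 1 := by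
    have h1 := Finset.card_le_card hsub
    have h2 : ((s.erase a).erase c).card = s.card - 2 := by
      rw [Finset.card_erase_of_mem (Finset.mem_erase.mpr ⟨fun h => hac h.symm, hcs⟩),
        Finset.card_erase_of_mem has]
      omega
    omega
  rcases s'.eq_empty_or_nonempty with hemp | hne
  · refine ⟨1/2, by norm_num, fun x hx hxi => absurd ?_ (by simp [hemp] : x ∉ s')⟩
    exact Finset.mem_filter.mpr ⟨hx, hxi⟩
  · obtain ⟨b, hb⟩ := hne
    have hbI : b ∈ Ioo (0:ℝ) 1 := (Finset.mem_filter.mp hb).2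
    refine ⟨b, hbI, fun x hx hxi => ?_⟩
    exact Finset.card_le_one.mp hcard' _ (Finset.mem_filter.mpr ⟨hx, hxi⟩) _ hb

lemma cubic_ineq {b : ℝ} (hb0 : 0 ≤ b) (hb1 : b ≤ 1) :
    2/3 - 2*Real.sqrt 3/27 ≤ (2 - b + b^3)/3 := by
  have h3 : Real.sqrt 3 ^ 2 = 3 := Real.sq_sqrt (by norm_num)
  nlinarith [mul_nonneg (sq_nonneg (b - Real.sqrt 3/3))
    (by positivity : (0:ℝ) ≤ b + 2*Real.sqrt 3/3), Real.sqrt_nonneg 3]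

lemma lower_bound {ν : Measure ℝ} [IsProbabilityMeasure ν] (hsupp : SuppLE 3 ν)
    (hco : ConvexOrder muTri ν) : 2/3 - 2*Real.sqrt 3/27 ≤ ∫ y, y^2 ∂ν := by
  obtain ⟨s, hcard, hν⟩ := hsupp
  obtain ⟨b, hbI, hbu⟩ := middle hcard (exists_nonpos hν hco) (exists_ge_one hν hco)
  set χ : ℝ → ℝ := fun y => max (b*y+0) ((1+b)*y + (-b)) with hχ
  have hχc : ConvexOn ℝ univ χ := convexOn_affine_max b 0 (1+b) (-b)
  have hχcont : Continuous χ :=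
    ((continuous_const.mul continuous_id').add continuous_const).max
      ((continuous_const.mul continuous_id').add continuous_const)
  have h1 : ∫ y, χ y ∂muTri ≤ ∫ y, χ y ∂ν :=
    hco χ hχc (muTri_integrable hχcont) (integrable_of_finsupp hν hχcont.measurable)
  have hnull : ν (Ioo (0:ℝ) 1 \ {b}) = 0 := by
    refine measure_mono_null (fun y hy => ?_) hν
    simp only [mem_compl_iff]
    intro hys
    exact hy.2 (hbu y hys hy.1)
  have h2 : ∫ y, χ y ∂ν ≤ ∫ y, y^2 ∂ν := by
    refine integral_mono_ae (integrable_of_finsupp hν hχcont.measurable)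
      (integrable_of_finsupp hν (measurable_id.pow_const 2)) ?_
    rw [Filter.EventuallyLE, ae_iff]
    refine measure_mono_null (fun y hy => ?_) hnull
    simp only [mem_setOf_eq, not_le] at hy
    by_contra hyn
    have hcases : ¬(y ∈ Ioo (0:ℝ) 1) ∨ y = b := by
      by_contra hh
      push_neg at hh
      exact hyn ⟨hh.1, hh.2⟩
    have hb0 : 0 < b := hbI.1
    have hb1 : b < 1 := hbI.2
    have : χ y ≤ y^2 := by
      rcases hcases with hni | rfl
      · simp only [mem_Ioo, not_and, not_lt] at hni
        rcases le_or_gt y 0 with hy0 | hy0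
        · apply max_le <;> nlinarith
        · have hy1 : 1 ≤ y := hni hy0
          apply max_le <;> nlinarith
      · apply max_le <;> nlinarith
    linarith
  have lin_ii : ∀ α β : ℝ, ∀ a c : ℝ,
      IntervalIntegrable (fun x => (α*x + β)*(2*x)) volume a c :=
    fun α β a c => (((continuous_const.mul continuous_id').add continuous_const).mul
      (continuous_const.mul continuous_id')).intervalIntegrable _ _
  have h3 : ∫ y, χ y ∂muTri = (2 - b + b^3)/3 := by
    rw [muTri_int, ← intervalIntegral.integral_add_adjacent_intervals (b := b)
      ((show Continuous fun x : ℝ => χ x * (2*x) from hχcont.mul (continuous_const.mul continuous_id')).intervalIntegrable _ _)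
      ((show Continuous fun x : ℝ => χ x * (2*x) from hχcont.mul (continuous_const.mul continuous_id')).intervalIntegrable _ _)]
    have e1 : ∫ x in (0:ℝ)..b, χ x * (2*x) = ∫ x in (0:ℝ)..b, (b*x + 0)*(2*x) := by
      apply intervalIntegral.integral_congr
      intro x hx
      rw [uIcc_of_le hbI.1.le] at hx
      have : (1+b)*x + (-b) ≤ b*x + 0 := by nlinarith [hx.2]
      simp only [hχ]
      rw [max_eq_left this]
    have e2 : ∫ x in b..(1:ℝ), χ x * (2*x) = ∫ x in b..(1:ℝ), ((1+b)*x + (-b))*(2*x) := by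
      apply intervalIntegral.integral_congr
      intro x hx
      rw [uIcc_of_le hbI.2.le] at hx
      have : b*x + 0 ≤ (1+b)*x + (-b) := by nlinarith [hx.1]
      simp only [hχ]
      rw [max_eq_right this]
    rw [e1, e2, poly_int, poly_int]
    ring
  have h4 := cubic_ineq hbI.1.le hbI.2.le
  linarith

lemma nuTri_moment {u : ℝ} (hu : u ∈ Ioo (0:ℝ) 1) :
    ∫ y, y^2 ∂(nuTri u) = (2 + u ^ ((3:ℝ)/2) - Real.sqrt u) / 3 := by
  rw [nuTri_int hu (fun y => y^2) (measurable_id.pow_const 2)]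
  have hrw : u ^ ((3:ℝ)/2) = Real.sqrt u ^ 3 := by
    rw [show ((3:ℝ)/2) = (1/2:ℝ) * (3:ℕ) by norm_num, Real.rpow_mul hu.1.le,
      Real.rpow_natCast, ← Real.sqrt_eq_rpow]
  rw [hrw]
  have hsu : Real.sqrt u ^ 2 = u := Real.sq_sqrt hu.1.le
  nlinarith [hsu]

lemma sqrt_third : Real.sqrt (1/3) = Real.sqrt 3 / 3 := by
  rw [show (1/3:ℝ) = (Real.sqrt 3/3)^2 by
      rw [div_pow, Real.sq_sqrt (by norm_num : (0:ℝ) ≤ 3)]; norm_num,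
    Real.sqrt_sq (by positivity)]

lemma val13 : ∫ y, y^2 ∂(nuTri (1/3)) = 2/3 - 2*Real.sqrt 3/27 := by
  have h13 : (1/3:ℝ) ∈ Ioo (0:ℝ) 1 := by norm_num
  rw [nuTri_int h13 (fun y => y^2) (measurable_id.pow_const 2), sqrt_third]
  have h3 : Real.sqrt 3 ^ 2 = 3 := Real.sq_sqrt (by norm_num)
  linear_combination (1/27 + Real.sqrt 3/81) * h3

lemma muTri_moment : ∫ x, x^2 ∂muTri = 1/2 := by
  rw [muTri_int (fun x => x^2)]
  have h : ∀ x : ℝ, x^2 * (2*x) = 2 * x^3 := fun x => by ring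
  simp only [h]
  rw [intervalIntegral.integral_const_mul, integral_pow]
  norm_num

lemma nuTri13_supp : SuppLE 3 (nuTri (1/3)) := by
  refine ⟨{0, Real.sqrt (1/3), 1}, ?_, ?_⟩
  · have h1 := Finset.card_insert_le (0:ℝ) {Real.sqrt (1/3), 1}
    have h2 := Finset.card_insert_le (Real.sqrt (1/3)) ({1} : Finset ℝ)
    simp only [Finset.card_singleton] at *
    omega
  · have h0 : (0:ℝ) ∈ ({0, Real.sqrt (1/3), 1} : Finset ℝ) := by simp
    have hs : Real.sqrt (1/3) ∈ ({0, Real.sqrt (1/3), 1} : Finset ℝ) := by simp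
    have h1 : (1:ℝ) ∈ ({0, Real.sqrt (1/3), 1} : Finset ℝ) := by simp
    simp only [nuTri, Measure.add_apply, Measure.smul_apply, smul_eq_mul]
    rw [Measure.dirac_apply, Measure.dirac_apply, Measure.dirac_apply]
    rw [indicator_of_notMem (by simpa using h0), indicator_of_notMem (by simpa using hs),
      indicator_of_notMem (by simpa using h1)]
    simp

lemma rpow_52 : (3:ℝ) ^ ((5:ℝ)/2) = 9 * Real.sqrt 3 := by
  rw [show ((5:ℝ)/2) = ((2:ℕ):ℝ) + (1/2:ℝ) by norm_num,
    Real.rpow_add (by norm_num : (0:ℝ) < 3), Real.rpow_natCast, ← Real.sqrt_eq_rpow]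
  norm_num

end Aux

set_option maxHeartbeats 1000000 in
theorem stmt16 :
    (∀ u ∈ Ioo (0:ℝ) 1, IsProbabilityMeasure (nuTri u) ∧ ConvexOrder muTri (nuTri u) ∧
        ∫ y, y ^ 2 ∂(nuTri u) = (2 + u ^ ((3:ℝ)/2) - Real.sqrt u) / 3) ∧
      sInf {c | ∃ ν : Measure ℝ, IsProbabilityMeasure ν ∧ SuppLE 3 ν ∧
          ConvexOrder muTri ν ∧ c = ∫ y, y ^ 2 ∂ν}
        = sInf {c | ∃ u ∈ Ioo (0:ℝ) 1, c = ∫ y, y ^ 2 ∂(nuTri u)} ∧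
      sInf {c | ∃ ν : Measure ℝ, IsProbabilityMeasure ν ∧ SuppLE 3 ν ∧
          ConvexOrder muTri ν ∧ c = ∫ y, y ^ 2 ∂ν}
        = ∫ y, y ^ 2 ∂(nuTri (1/3)) ∧
      sInf {c | ∃ ν : Measure ℝ, IsProbabilityMeasure ν ∧ SuppLE 3 ν ∧
          ConvexOrder muTri ν ∧ c = ∫ y, y ^ 2 ∂ν} - ∫ x, x ^ 2 ∂muTri
        = 1 / 6 - 2 / (3:ℝ) ^ ((5:ℝ)/2) := by
  have hK13 : (1/3:ℝ) ∈ Ioo (0:ℝ) 1 := by norm_num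
  set K : ℝ := 2/3 - 2*Real.sqrt 3/27 with hK
  have part1 : ∀ u ∈ Ioo (0:ℝ) 1, IsProbabilityMeasure (nuTri u) ∧ ConvexOrder muTri (nuTri u) ∧
      ∫ y, y ^ 2 ∂(nuTri u) = (2 + u ^ ((3:ℝ)/2) - Real.sqrt u) / 3 :=
    fun u hu => ⟨nuTri_prob hu, nuTri_convexOrder hu, nuTri_moment hu⟩
  have hfam_lb : ∀ c ∈ {c | ∃ u ∈ Ioo (0:ℝ) 1, c = ∫ y, y ^ 2 ∂(nuTri u)}, K ≤ c := by
    rintro c ⟨u, hu, rfl⟩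
    rw [nuTri_moment hu]
    have hs0 : 0 ≤ Real.sqrt u := Real.sqrt_nonneg u
    have hs1 : Real.sqrt u ≤ 1 := sqrt_le_one hu
    have hci := cubic_ineq hs0 hs1
    have hrw : u ^ ((3:ℝ)/2) = Real.sqrt u ^ 3 := by
      rw [show ((3:ℝ)/2) = (1/2:ℝ) * (3:ℕ) by norm_num, Real.rpow_mul hu.1.le,
        Real.rpow_natCast, ← Real.sqrt_eq_rpow]
    rw [hrw]
    have : (2 + Real.sqrt u ^ 3 - Real.sqrt u) / 3 = (2 - Real.sqrt u + Real.sqrt u ^ 3)/3 := by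
      ring
    rw [this]
    exact hci
  have hbig_lb : ∀ c ∈ {c | ∃ ν : Measure ℝ, IsProbabilityMeasure ν ∧ SuppLE 3 ν ∧
      ConvexOrder muTri ν ∧ c = ∫ y, y ^ 2 ∂ν}, K ≤ c := by
    rintro c ⟨ν, hp, hsupp, hco, rfl⟩
    haveI := hp
    exact lower_bound hsupp hco
  have hmem_big : K ∈ {c | ∃ ν : Measure ℝ, IsProbabilityMeasure ν ∧ SuppLE 3 ν ∧
      ConvexOrder muTri ν ∧ c = ∫ y, y ^ 2 ∂ν} :=
    ⟨nuTri (1/3), nuTri_prob hK13, nuTri13_supp, nuTri_convexOrder hK13, val13.symm⟩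
  have hmem_fam : K ∈ {c | ∃ u ∈ Ioo (0:ℝ) 1, c = ∫ y, y ^ 2 ∂(nuTri u)} :=
    ⟨1/3, hK13, val13.symm⟩
  have hbig : sInf {c | ∃ ν : Measure ℝ, IsProbabilityMeasure ν ∧ SuppLE 3 ν ∧
      ConvexOrder muTri ν ∧ c = ∫ y, y ^ 2 ∂ν} = K :=
    le_antisymm (csInf_le ⟨K, hbig_lb⟩ hmem_big) (le_csInf ⟨K, hmem_big⟩ hbig_lb)
  have hfam : sInf {c | ∃ u ∈ Ioo (0:ℝ) 1, c = ∫ y, y ^ 2 ∂(nuTri u)} = K :=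
    le_antisymm (csInf_le ⟨K, hfam_lb⟩ hmem_fam) (le_csInf ⟨K, hmem_fam⟩ hfam_lb)
  refine ⟨part1, by rw [hbig, hfam], by rw [hbig, val13], ?_⟩
  rw [hbig, muTri_moment, rpow_52]
  have h3 : Real.sqrt 3 ^ 2 = 3 := Real.sq_sqrt (by norm_num)
  have hne : Real.sqrt 3 ≠ 0 := by positivity
  rw [hK]
  field_simp
  linear_combination (-648:ℝ) * h3
end
end

section
/- In dimension 1, dual quantization on a fixed grid preserves the convex order: let Γ = {x₁ < … < x_N} and let μ, η be probability measures with support contained in [x₁,x_N] such that μ ≤_cvx η. If μ̌^Γ and η̌^Γ denote the laws of the dual (splitting) quantizations of μ and η on Γ, then μ̌^Γ ≤_cvx η̌^Γ. -/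
open MeasureTheory Set

noncomputable section

variable {E : Type*} [NormedAddCommGroup E] [NormedSpace ℝ E] [MeasurableSpace E] [BorelSpace E]

/-- The splitting operator associated with the grid `x₀ < x₁ < ⋯ < x_N` : a point `z` in
`[x_i, x_{i+1})` is sent to `x_i` if `u ≤ (x_{i+1}-z)/(x_{i+1}-x_i)` and to `x_{i+1}`
otherwise; `x_N` (and any point outside the grid range) is left unchanged. -/
def splitOp {N : ℕ} (x : Fin (N + 1) → ℝ) (z u : ℝ) : ℝ :=
  if h : ∃ i : Fin N, x i.castSucc ≤ z ∧ z < x i.succ then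
    if u ≤ (x (Classical.choose h).succ - z)
        / (x (Classical.choose h).succ - x (Classical.choose h).castSucc)
    then x (Classical.choose h).castSucc else x (Classical.choose h).succ
  else z

/-- The dual quantization of `μ` on the grid `x` : the law of `splitOp x Z U` where
`Z ∼ μ` and `U` is uniform on `[0,1]`, independent of `Z`. -/
def dualQuant {N : ℕ} (x : Fin (N + 1) → ℝ) (μ : Measure ℝ) : Measure ℝ :=
  (μ.prod (volume.restrict (Icc (0:ℝ) 1))).map fun q => splitOp x q.1 q.2


namespace DQAux

variable {N : ℕ} {x : Fin (N + 1) → ℝ}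

lemma exists_index (hx : StrictMono x) {z : ℝ} (h0 : x 0 ≤ z) (hlt : z < x (Fin.last N)) :
    ∃ i : Fin N, x i.castSucc ≤ z ∧ z < x i.succ := by
  by_contra h
  push_neg at h
  have key : ∀ j : Fin (N + 1), x j ≤ z := by
    intro j
    induction j using Fin.induction with
    | zero => exact h0
    | succ i ih => exact h i ih
  exact absurd (key (Fin.last N)) (not_le.mpr hlt)

lemma index_unique (hx : StrictMono x) {z : ℝ} {i j : Fin N}
    (hi : x i.castSucc ≤ z ∧ z < x i.succ) (hj : x j.castSucc ≤ z ∧ z < x j.succ) : i = j := by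
  by_contra hne
  rcases lt_or_gt_of_ne hne with h | h
  · have hle : (i.succ : Fin (N + 1)) ≤ j.castSucc := by
      rw [Fin.le_def]
      simp only [Fin.val_succ, Fin.coe_castSucc]
      exact h
    exact absurd (hi.2.trans_le ((hx.monotone hle).trans hj.1)) (lt_irrefl z)
  · have hle : (j.succ : Fin (N + 1)) ≤ i.castSucc := by
      rw [Fin.le_def]
      simp only [Fin.val_succ, Fin.coe_castSucc]
      exact h
    exact absurd (hj.2.trans_le ((hx.monotone hle).trans hi.1)) (lt_irrefl z)

lemma splitOp_eq_of_mem (hx : StrictMono x) {z : ℝ} {i : Fin N}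
    (hi : x i.castSucc ≤ z ∧ z < x i.succ) (u : ℝ) :
    splitOp x z u =
      if u ≤ (x i.succ - z) / (x i.succ - x i.castSucc) then x i.castSucc else x i.succ := by
  have h : ∃ k : Fin N, x k.castSucc ≤ z ∧ z < x k.succ := ⟨i, hi⟩
  have hc : Classical.choose h = i := index_unique hx (Classical.choose_spec h) hi
  rw [splitOp, dif_pos h, hc]

lemma splitOp_mem (hx : StrictMono x) {z : ℝ} (hz : z ∈ Icc (x 0) (x (Fin.last N))) (u : ℝ) :
    splitOp x z u ∈ Icc (x 0) (x (Fin.last N)) := by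
  rw [splitOp]
  split_ifs with h h'
  · exact ⟨hx.monotone (Fin.zero_le _), hx.monotone (Fin.le_last _)⟩
  · exact ⟨hx.monotone (Fin.zero_le _), hx.monotone (Fin.le_last _)⟩
  · exact hz

lemma measurable_splitOp (hx : StrictMono x) :
    Measurable (fun p : ℝ × ℝ => splitOp x p.1 p.2) := by
  have hF : (fun p : ℝ × ℝ => splitOp x p.1 p.2) = fun p : ℝ × ℝ =>
      (∑ i : Fin N, if x i.castSucc ≤ p.1 ∧ p.1 < x i.succ then
        (if p.2 ≤ (x i.succ - p.1) / (x i.succ - x i.castSucc) then x i.castSucc else x i.succ)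
        else 0) +
      (if x 0 ≤ p.1 ∧ p.1 < x (Fin.last N) then 0 else p.1) := by
    funext p
    by_cases h : ∃ i : Fin N, x i.castSucc ≤ p.1 ∧ p.1 < x i.succ
    · obtain ⟨i, hi⟩ := h
      rw [splitOp_eq_of_mem hx hi]
      rw [Finset.sum_eq_single i ?side ?notmem]
      case side =>
        intro j _ hj
        rw [if_neg]
        intro hj'
        exact hj (index_unique hx hj' hi)
      case notmem =>
        intro hi'; exact absurd (Finset.mem_univ i) hi'
      have h1 : x 0 ≤ p.1 := le_trans (hx.monotone (Fin.zero_le _)) hi.1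
      have h2 : p.1 < x (Fin.last N) := lt_of_lt_of_le hi.2 (hx.monotone (Fin.le_last _))
      rw [if_pos hi, if_pos (show x 0 ≤ p.1 ∧ p.1 < x (Fin.last N) from ⟨h1, h2⟩), add_zero]
    · rw [splitOp, dif_neg h]
      have hall : ∀ i : Fin N, ¬(x i.castSucc ≤ p.1 ∧ p.1 < x i.succ) := fun i hi => h ⟨i, hi⟩
      rw [Finset.sum_eq_zero (fun i _ => if_neg (hall i)), if_neg, zero_add]
      intro hmem
      exact h (exists_index hx hmem.1 hmem.2)
  rw [hF]
  apply Measurable.add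
  · apply Finset.measurable_sum
    intro i _
    apply Measurable.ite
    · exact measurable_fst measurableSet_Ico
    · apply Measurable.ite _ measurable_const measurable_const
      exact measurableSet_le measurable_snd
        (((continuous_const.sub continuous_id).div_const _).measurable.comp measurable_fst)
    · exact measurable_const
  · apply Measurable.ite (measurable_fst measurableSet_Ico) measurable_const measurable_fst

instance : IsProbabilityMeasure (volume.restrict (Icc (0:ℝ) 1)) :=
  ⟨by simp [Real.volume_Icc]⟩

lemma integral_unif (a b t : ℝ) (ht0 : 0 ≤ t) (ht1 : t ≤ 1) :
    ∫ u in Icc (0:ℝ) 1, (if u ≤ t then a else b) = t * a + (1 - t) * b := by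
  have hfun : (fun u => if u ≤ t then a else b)
      = fun u => (Iic t).indicator (fun _ => a - b) u + b := by
    funext u; by_cases h : u ≤ t <;> simp [Set.indicator, h]
  rw [hfun, integral_add ((integrable_const (a - b)).indicator measurableSet_Iic)
      (integrable_const b)]
  rw [integral_indicator measurableSet_Iic, Measure.restrict_restrict measurableSet_Iic,
    setIntegral_const, integral_const]
  have hset : Iic t ∩ Icc (0:ℝ) 1 = Icc 0 t := by
    ext u
    simp only [mem_inter_iff, mem_Iic, mem_Icc]
    constructor
    · rintro ⟨h1, h2, h3⟩; exact ⟨h2, h1⟩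
    · rintro ⟨h1, h2⟩; exact ⟨h2, h1, h2.trans ht1⟩
  rw [hset]
  simp only [measureReal_def, measure_univ, ENNReal.toReal_one, one_smul, smul_eq_mul,
    Real.volume_Icc, sub_zero, ENNReal.toReal_ofReal ht0]
  ring

/-- the chord of `φ` over `[x i, x (i+1)]`, as an affine function on all of `ℝ`. -/
def chord (x : Fin (N + 1) → ℝ) (φ : ℝ → ℝ) (i : Fin N) (z : ℝ) : ℝ :=
  φ (x i.castSucc)
    + (φ (x i.succ) - φ (x i.castSucc)) / (x i.succ - x i.castSucc) * (z - x i.castSucc)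

lemma chord_castSucc (φ : ℝ → ℝ) (i : Fin N) : chord x φ i (x i.castSucc) = φ (x i.castSucc) := by
  simp [chord]

lemma chord_succ (hx : StrictMono x) (φ : ℝ → ℝ) (i : Fin N) :
    chord x φ i (x i.succ) = φ (x i.succ) := by
  have hd : x i.succ - x i.castSucc ≠ 0 := sub_ne_zero.mpr (hx (Fin.castSucc_lt_succ (i := i))).ne'
  rw [chord, div_mul_cancel₀ _ hd]
  ring

lemma inner_integral (hx : StrictMono x) (φ : ℝ → ℝ) {z : ℝ} {i : Fin N}
    (hi : x i.castSucc ≤ z ∧ z < x i.succ) :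
    ∫ u in Icc (0:ℝ) 1, φ (splitOp x z u) = chord x φ i z := by
  have hd : (0:ℝ) < x i.succ - x i.castSucc := sub_pos.mpr (hx (Fin.castSucc_lt_succ (i := i)))
  set t : ℝ := (x i.succ - z) / (x i.succ - x i.castSucc) with ht
  have ht0 : 0 ≤ t := div_nonneg (by linarith [hi.2]) hd.le
  have ht1 : t ≤ 1 := (div_le_one hd).mpr (by linarith [hi.1])
  have h1 : (fun u => φ (splitOp x z u))
      = fun u => if u ≤ t then φ (x i.castSucc) else φ (x i.succ) := by
    funext u
    rw [splitOp_eq_of_mem hx hi]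
    split_ifs <;> rfl
  have hd' : x i.succ - x i.castSucc ≠ 0 := hd.ne'
  rw [h1, integral_unif _ _ t ht0 ht1, chord, ht]
  field_simp
  ring

lemma slope_swap (f : ℝ → ℝ) (a b : ℝ) : (f b - f a) / (b - a) = (f a - f b) / (a - b) := by
  rw [← neg_div_neg_eq]
  congr 1 <;> ring

lemma slope_mono {φ : ℝ → ℝ} (hφ : ConvexOn ℝ univ φ) (hx : StrictMono x) {i j : Fin N}
    (hij : i ≤ j) :
    (φ (x i.succ) - φ (x i.castSucc)) / (x i.succ - x i.castSucc)
      ≤ (φ (x j.succ) - φ (x j.castSucc)) / (x j.succ - x j.castSucc) := by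
  rcases eq_or_lt_of_le hij with rfl | hlt
  · exact le_refl _
  · have hab : x i.castSucc < x i.succ := hx (Fin.castSucc_lt_succ (i := i))
    have hcd : x j.castSucc < x j.succ := hx (Fin.castSucc_lt_succ (i := j))
    have hbc : x i.succ ≤ x j.castSucc := hx.monotone (by
      rw [Fin.le_def]
      simp only [Fin.val_succ, Fin.coe_castSucc]
      exact hlt)
    have had : x i.castSucc < x j.succ := hab.trans_le (hbc.trans hcd.le)
    have h1 : (φ (x i.succ) - φ (x i.castSucc)) / (x i.succ - x i.castSucc)
        ≤ (φ (x j.succ) - φ (x i.castSucc)) / (x j.succ - x i.castSucc) :=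
      hφ.secant_mono (mem_univ _) (mem_univ _) (mem_univ _) hab.ne' had.ne'
        (hbc.trans hcd.le)
    have h2 : (φ (x i.castSucc) - φ (x j.succ)) / (x i.castSucc - x j.succ)
        ≤ (φ (x j.castSucc) - φ (x j.succ)) / (x j.castSucc - x j.succ) :=
      hφ.secant_mono (mem_univ _) (mem_univ _) (mem_univ _) had.ne hcd.ne
        (hab.le.trans hbc)
    rw [← slope_swap φ (x i.castSucc) (x j.succ), ← slope_swap φ (x j.castSucc) (x j.succ)] at h2
    exact h1.trans h2

lemma chord_le_left {φ : ℝ → ℝ} (hφ : ConvexOn ℝ univ φ) (hx : StrictMono x) (i : Fin N)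
    {w : ℝ} (hw : x i.succ ≤ w) : chord x φ i w ≤ φ w := by
  rcases eq_or_lt_of_le hw with rfl | hlt
  · rw [chord_succ hx]
  · have hab : x i.castSucc < x i.succ := hx (Fin.castSucc_lt_succ (i := i))
    have h := hφ.secant_mono (mem_univ (x i.castSucc)) (mem_univ (x i.succ)) (mem_univ w)
      hab.ne' (hab.trans hlt).ne' hw
    have hwa : (0:ℝ) < w - x i.castSucc := by linarith
    have h2 := mul_le_mul_of_nonneg_right h hwa.le
    rw [div_mul_cancel₀ _ hwa.ne'] at h2
    rw [chord]
    linarith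

lemma chord_le_right {φ : ℝ → ℝ} (hφ : ConvexOn ℝ univ φ) (hx : StrictMono x) (i : Fin N)
    {w : ℝ} (hw : w ≤ x i.castSucc) : chord x φ i w ≤ φ w := by
  rcases eq_or_lt_of_le hw with rfl | hlt
  · rw [chord_castSucc]
  · have hab : x i.castSucc < x i.succ := hx (Fin.castSucc_lt_succ (i := i))
    have h := hφ.secant_mono (mem_univ (x i.castSucc)) (mem_univ w) (mem_univ (x i.succ))
      hlt.ne hab.ne' (hlt.le.trans hab.le)
    have hwa : w - x i.castSucc < 0 := by linarith
    have h2 := mul_le_mul_of_nonpos_right h hwa.le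
    rw [div_mul_cancel₀ _ hwa.ne] at h2
    rw [chord]
    linarith

lemma chord_dom {φ : ℝ → ℝ} (hφ : ConvexOn ℝ univ φ) (hx : StrictMono x) (j i : Fin N) {z : ℝ}
    (hz1 : x j.castSucc ≤ z) (hz2 : z ≤ x j.succ) : chord x φ i z ≤ chord x φ j z := by
  rcases lt_trichotomy i j with h | rfl | h
  · have hbc : x i.succ ≤ x j.castSucc := hx.monotone (by
      rw [Fin.le_def]
      simp only [Fin.val_succ, Fin.coe_castSucc]
      exact h)
    have h1 : chord x φ i (x j.castSucc) ≤ φ (x j.castSucc) := chord_le_left hφ hx i hbc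
    have h2 := slope_mono (x := x) hφ hx h.le
    have e1 : chord x φ i z = chord x φ i (x j.castSucc)
        + (φ (x i.succ) - φ (x i.castSucc)) / (x i.succ - x i.castSucc) * (z - x j.castSucc) := by
      rw [chord, chord]; ring
    have e2 : chord x φ j z = φ (x j.castSucc)
        + (φ (x j.succ) - φ (x j.castSucc)) / (x j.succ - x j.castSucc) * (z - x j.castSucc) := by
      rw [chord]
    have h3 := mul_le_mul_of_nonneg_right h2 (sub_nonneg.mpr hz1)
    rw [e1, e2]
    linarith
  · exact le_refl _
  · have hcb : x j.succ ≤ x i.castSucc := hx.monotone (by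
      rw [Fin.le_def]
      simp only [Fin.val_succ, Fin.coe_castSucc]
      exact h)
    have h1 : chord x φ i (x j.succ) ≤ φ (x j.succ) := chord_le_right hφ hx i hcb
    have h2 := slope_mono (x := x) hφ hx h.le
    have e1 : chord x φ i z = chord x φ i (x j.succ)
        + (φ (x i.succ) - φ (x i.castSucc)) / (x i.succ - x i.castSucc) * (z - x j.succ) := by
      rw [chord, chord]; ring
    have e2 : chord x φ j z = chord x φ j (x j.succ)
        + (φ (x j.succ) - φ (x j.castSucc)) / (x j.succ - x j.castSucc) * (z - x j.succ) := by
      rw [chord, chord]; ring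
    have h3 := mul_le_mul_of_nonpos_right h2 (sub_nonpos.mpr hz2)
    rw [e1, e2, chord_succ hx]
    linarith

lemma psi_convex [NeZero N] {φ : ℝ → ℝ} (hφ : ConvexOn ℝ univ φ) (hx : StrictMono x) :
    ConvexOn ℝ univ
      (fun z => Finset.univ.sup' Finset.univ_nonempty fun i : Fin N => chord x φ i z) := by
  refine ⟨convex_univ, fun p _ q _ a b ha hb hab => ?_⟩
  dsimp only
  obtain ⟨i, -, hi⟩ := Finset.exists_mem_eq_sup' Finset.univ_nonempty
    (fun i : Fin N => chord x φ i (a • p + b • q))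
  rw [hi]
  have h1 : chord x φ i (a • p + b • q) = a * chord x φ i p + b * chord x φ i q := by
    simp only [chord, smul_eq_mul]
    linear_combination ((φ (x i.succ) - φ (x i.castSucc)) / (x i.succ - x i.castSucc)
      * x i.castSucc - φ (x i.castSucc)) * hab
  rw [h1]
  have hp : chord x φ i p ≤ Finset.univ.sup' Finset.univ_nonempty
      (fun k : Fin N => chord x φ k p) :=
    Finset.le_sup' (fun k : Fin N => chord x φ k p) (Finset.mem_univ i)
  have hq : chord x φ i q ≤ Finset.univ.sup' Finset.univ_nonempty
      (fun k : Fin N => chord x φ k q) :=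
    Finset.le_sup' (fun k : Fin N => chord x φ k q) (Finset.mem_univ i)
  have := add_le_add (mul_le_mul_of_nonneg_left hp ha) (mul_le_mul_of_nonneg_left hq hb)
  simpa [smul_eq_mul] using this

lemma integral_dualQuant (hx : StrictMono x) (μ : Measure ℝ) [IsProbabilityMeasure μ]
    (hμs : μ ((Icc (x 0) (x (Fin.last N)))ᶜ) = 0) (φ : ℝ → ℝ) (hφc : Continuous φ) :
    ∫ y, φ y ∂(dualQuant x μ) = ∫ z, (∫ u in Icc (0:ℝ) 1, φ (splitOp x z u)) ∂μ := by
  obtain ⟨C, hC⟩ := isCompact_Icc.exists_bound_of_continuousOn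
    (hφc.continuousOn : ContinuousOn φ (Icc (x 0) (x (Fin.last N))))
  have hmeas := measurable_splitOp (x := x) hx
  have hae : ∀ᵐ p ∂(μ.prod (volume.restrict (Icc (0:ℝ) 1))),
      p.1 ∈ Icc (x 0) (x (Fin.last N)) := by
    rw [ae_iff]
    have hset : {p : ℝ × ℝ | ¬ p.1 ∈ Icc (x 0) (x (Fin.last N))}
        = (Icc (x 0) (x (Fin.last N)))ᶜ ×ˢ (univ : Set ℝ) := by
      ext p; simp
    rw [hset, Measure.prod_prod, hμs, zero_mul]
  have hint : Integrable (fun p : ℝ × ℝ => φ (splitOp x p.1 p.2))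
      (μ.prod (volume.restrict (Icc (0:ℝ) 1))) := by
    refine Integrable.mono' (integrable_const C)
      ((hφc.measurable.comp hmeas).aestronglyMeasurable) ?_
    filter_upwards [hae] with p hp
    exact hC _ (splitOp_mem hx hp p.2)
  rw [dualQuant, integral_map hmeas.aemeasurable hφc.aestronglyMeasurable,
    integral_prod _ hint]

end DQAux

open DQAux in

theorem stmt17 (N : ℕ) (x : Fin (N + 1) → ℝ) (hx : StrictMono x)
    (μ η : Measure ℝ) [IsProbabilityMeasure μ] [IsProbabilityMeasure η]
    (hμs : μ ((Icc (x 0) (x (Fin.last N)))ᶜ) = 0)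
    (hηs : η ((Icc (x 0) (x (Fin.last N)))ᶜ) = 0)
    (hcvx : ConvexOrder μ η) :
    ConvexOrder (dualQuant x μ) (dualQuant x η) := by
  rcases Nat.eq_zero_or_pos N with rfl | hN
  · have hid : (fun q : ℝ × ℝ => splitOp x q.1 q.2) = Prod.fst := by
      funext q
      rw [splitOp, dif_neg]
      rintro ⟨i, -⟩
      exact i.elim0
    have hdq : ∀ μ' : Measure ℝ, dualQuant x μ' = μ' := by
      intro μ'
      rw [dualQuant, hid, Measure.map_fst_prod]
      simp [Real.volume_Icc]
    rw [hdq μ, hdq η]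
    exact hcvx
  haveI : NeZero N := ⟨hN.ne'⟩
  intro φ hφ _ _
  have hφc : Continuous φ := by
    rw [← continuousOn_univ]
    exact hφ.continuousOn isOpen_univ
  set Ψ : ℝ → ℝ := fun z => Finset.univ.sup' Finset.univ_nonempty
    (fun i : Fin N => chord x φ i z) with hΨdef
  have hΨeq : ∀ z ∈ Icc (x 0) (x (Fin.last N)),
      (∫ u in Icc (0:ℝ) 1, φ (splitOp x z u)) = Ψ z := by
    intro z hz
    by_cases h : ∃ i : Fin N, x i.castSucc ≤ z ∧ z < x i.succ
    · obtain ⟨i, hi⟩ := h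
      rw [inner_integral hx φ hi, hΨdef]
      refine (le_antisymm ?_
        (Finset.le_sup' (fun k : Fin N => chord x φ k z) (Finset.mem_univ i))).symm
      exact Finset.sup'_le _ _ fun j _ => chord_dom hφ hx i j hi.1 hi.2.le
    · have hzl : z = x (Fin.last N) := by
        rcases eq_or_lt_of_le hz.2 with he | hlt
        · exact he
        · exact absurd (exists_index hx hz.1 hlt) h
      have hconst : ∀ u, φ (splitOp x z u) = φ z := by
        intro u; rw [splitOp, dif_neg h]
      have hci : ∫ u in Icc (0:ℝ) 1, φ (splitOp x z u) = ∫ _u in Icc (0:ℝ) 1, φ z :=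
        integral_congr_ae (Filter.Eventually.of_forall hconst)
      rw [hci, integral_const, probReal_univ, one_smul]
      set j : Fin N := ⟨N - 1, by omega⟩ with hj
      have hjs : (j.succ : Fin (N + 1)) = Fin.last N := by
        ext
        simp only [Fin.val_succ, Fin.val_last, hj]
        omega
      have hzz : z = x j.succ := by rw [hjs]; exact hzl
      have h1 : Ψ z = chord x φ j z := by
        rw [hΨdef]
        refine le_antisymm (Finset.sup'_le _ _ fun i _ => chord_dom hφ hx j i ?_ ?_)
          (Finset.le_sup' (fun k : Fin N => chord x φ k z) (Finset.mem_univ j))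
        · rw [hzz]; exact (hx (Fin.castSucc_lt_succ (i := j))).le
        · exact hzz.le
      rw [h1, hzz, chord_succ hx]
  have hcont : ∀ i : Fin N, Continuous (chord x φ i) := by
    intro i
    unfold chord
    exact continuous_const.add (continuous_const.mul (continuous_id.sub continuous_const))
  have hΨc : Continuous Ψ := by
    rw [continuous_iff_continuousAt]
    intro z
    exact ContinuousAt.finset_sup'_apply Finset.univ_nonempty
      fun i _ => (hcont i).continuousAt
  obtain ⟨C, hC⟩ := isCompact_Icc.exists_bound_of_continuousOn
    (hΨc.continuousOn : ContinuousOn Ψ (Icc (x 0) (x (Fin.last N))))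
  have hcompl : {z : ℝ | ¬ z ∈ Icc (x 0) (x (Fin.last N))} = (Icc (x 0) (x (Fin.last N)))ᶜ :=
    rfl
  have haeμ : ∀ᵐ z ∂μ, z ∈ Icc (x 0) (x (Fin.last N)) := by
    rw [ae_iff, hcompl]; exact hμs
  have haeη : ∀ᵐ z ∂η, z ∈ Icc (x 0) (x (Fin.last N)) := by
    rw [ae_iff, hcompl]; exact hηs
  have hΨintμ : Integrable Ψ μ := by
    refine Integrable.mono' (integrable_const C) hΨc.aestronglyMeasurable ?_
    filter_upwards [haeμ] with z hz using hC z hz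
  have hΨintη : Integrable Ψ η := by
    refine Integrable.mono' (integrable_const C) hΨc.aestronglyMeasurable ?_
    filter_upwards [haeη] with z hz using hC z hz
  rw [integral_dualQuant hx μ hμs φ hφc, integral_dualQuant hx η hηs φ hφc]
  calc ∫ z, (∫ u in Icc (0:ℝ) 1, φ (splitOp x z u)) ∂μ
      = ∫ z, Ψ z ∂μ := integral_congr_ae (haeμ.mono fun z hz => hΨeq z hz)
    _ ≤ ∫ z, Ψ z ∂η := hcvx Ψ (psi_convex hφ hx) hΨintμ hΨintη
    _ = ∫ z, (∫ u in Icc (0:ℝ) 1, φ (splitOp x z u)) ∂η :=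
        (integral_congr_ae (haeη.mono fun z hz => hΨeq z hz)).symm
end
end

section
/- Let μ ≤_cvx ν be probability measures on ℝ^d with ν compactly supported and μ with finite second moment. Let Γ be a quadratic optimal primal N-quantizer of μ and Γ' a dual K-quantization grid for ν with splitting operator. For any martingale coupling π ∈ M(μ,ν), the measure π̄ obtained as the joint law of (Proj_Γ(X), Proj^{del}_{Γ'}(Y,U)) with (X,Y) ∼ π and U ∼ U([0,1]) independent, is a martingale coupling between the primal quantization μ̂^N of μ and the dual quantization ν̌^K of ν. -/
open MeasureTheory Set

noncomputable section

variable {E : Type*} [NormedAddCommGroup E] [NormedSpace ℝ E] [MeasurableSpace E] [BorelSpace E]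

set_option linter.unusedSectionVars false

lemma quantErr_two (Γ : Finset E) (μ : Measure E) :
    quantErrPow 2 Γ μ = ∫ x, Metric.infDist x (Γ : Set E) ^ (2:ℕ) ∂μ := by
  unfold quantErrPow
  simp_rw [show (2:ℝ) = ((2:ℕ):ℝ) by norm_num, Real.rpow_natCast]

lemma int_two {μ : Measure E} [IsProbabilityMeasure μ]
    (hμ2 : Integrable (fun x => ‖x‖ ^ (2 : ℝ)) μ) :
    Integrable (fun x => ‖x‖ ^ (2:ℕ)) μ := by
  have : (fun x : E => ‖x‖ ^ (2:ℝ)) = fun x => ‖x‖ ^ (2:ℕ) := by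
    funext x
    rw [show (2:ℝ) = ((2:ℕ):ℝ) by norm_num, Real.rpow_natCast]
  rwa [this] at hμ2

lemma int_id {d : ℕ} {μ : Measure (Ed d)} [IsProbabilityMeasure μ]
    (hμ2 : Integrable (fun x => ‖x‖ ^ (2 : ℝ)) μ) :
    Integrable (fun x : Ed d => x) μ := by
  have h2 := int_two hμ2
  refine Integrable.mono' ((integrable_const (1:ℝ)).add h2) ?_ ?_
  · exact measurable_id.aestronglyMeasurable
  · filter_upwards with x
    have := sq_nonneg (‖x‖ - 1)
    simp only [Pi.add_apply]
    nlinarith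

lemma int_sq_sub {d : ℕ} {μ : Measure (Ed d)} [IsProbabilityMeasure μ]
    (hμ2 : Integrable (fun x => ‖x‖ ^ (2 : ℝ)) μ) {h : Ed d → Ed d} (hh : Measurable h)
    {C : ℝ} (hC : ∀ x, ‖h x‖ ≤ C) :
    Integrable (fun x => ‖x - h x‖ ^ (2:ℕ)) μ := by
  have h2 := int_two hμ2
  refine Integrable.mono' (((h2.const_mul 2)).add (integrable_const (2*C^2))) ?_ ?_
  · exact ((measurable_id.sub hh).norm.pow_const 2).aestronglyMeasurable
  · filter_upwards with x
    have h1 : ‖x - h x‖ ≤ ‖x‖ + ‖h x‖ := norm_sub_le _ _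
    have h3 := hC x
    have h4 : (0:ℝ) ≤ ‖x - h x‖ := norm_nonneg _
    have h5 : (0:ℝ) ≤ ‖h x‖ := norm_nonneg _
    have hsq : ‖x - h x‖ ^ 2 ≤ (‖x‖ + ‖h x‖) ^ 2 := pow_le_pow_left₀ h4 h1 2
    have hC2 : ‖h x‖ ^ 2 ≤ C ^ 2 := pow_le_pow_left₀ h5 h3 2
    have habs : ‖‖x - h x‖ ^ (2:ℕ)‖ = ‖x - h x‖ ^ 2 := by
      rw [Real.norm_eq_abs, abs_of_nonneg (pow_nonneg h4 2)]
    rw [habs]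
    simp only [Pi.add_apply]
    nlinarith [sq_nonneg (‖x‖ - ‖h x‖)]

lemma stationary {d N : ℕ} {μ : Measure (Ed d)} [IsProbabilityMeasure μ]
    (hμ2 : Integrable (fun x => ‖x‖ ^ (2 : ℝ)) μ)
    {Γ : Finset (Ed d)} (hΓ : IsOptimalQuantizer 2 N Γ μ)
    {f : Ed d → Ed d} (hf : IsNearestProj Γ f) (a : Ed d) (ha : a ∈ Γ) :
    ∫ x in f ⁻¹' {a}, (x - a) ∂μ = 0 := by
  classical
  obtain ⟨hfm, hfp⟩ := hf
  set S : Set (Ed d) := f ⁻¹' {a} with hSdef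
  have hS : MeasurableSet S := hfm (measurableSet_singleton a)
  have hint_sub : Integrable (fun x : Ed d => x - a) μ :=
    (int_id hμ2).sub (integrable_const a)
  set v : Ed d := ∫ x in S, (x - a) ∂μ with hvdef
  set b : Ed d := a + v with hbdef
  set fb : Ed d → Ed d := fun x => if f x = a then b else f x with hfbdef
  have hfbm : Measurable fb := Measurable.ite (hfm (measurableSet_singleton a))
    measurable_const hfm
  -- bound on fb
  set C : ℝ := max ‖b‖ (Γ.sup' hΓ.1 fun c => ‖c‖) with hCdef
  have hfbC : ∀ x, ‖fb x‖ ≤ C := by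
    intro x
    by_cases h : f x = a
    · simp [hfbdef, h, hCdef, le_max_left]
    · simp only [hfbdef, h, if_false, hCdef]
      exact le_max_of_le_right (Finset.le_sup' (fun c => ‖c‖) (hfp x).1)
  have hfC : ∀ x, ‖f x‖ ≤ C := fun x =>
    le_max_of_le_right (Finset.le_sup' (fun c => ‖c‖) (hfp x).1)
  have hIb : Integrable (fun x => ‖x - fb x‖ ^ (2:ℕ)) μ := int_sq_sub hμ2 hfbm hfbC
  have hIf : Integrable (fun x => ‖x - f x‖ ^ (2:ℕ)) μ := int_sq_sub hμ2 hfm hfC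
  -- the grid Γb
  set Γb : Finset (Ed d) := insert b (Γ.erase a) with hΓbdef
  have hΓbne : Γb.Nonempty := ⟨b, Finset.mem_insert_self _ _⟩
  have hΓbcard : Γb.card ≤ N := by
    have h1 := Finset.card_insert_le b (Γ.erase a)
    have h2 : (Γ.erase a).card = Γ.card - 1 := Finset.card_erase_of_mem ha
    have h3 : 1 ≤ Γ.card := Finset.card_pos.2 hΓ.1
    have h4 := hΓ.2.1
    rw [← hΓbdef] at h1
    omega
  have hfbmem : ∀ x, fb x ∈ Γb := by
    intro x
    by_cases h : f x = a
    · simp [hfbdef, h, hΓbdef]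
    · simp only [hfbdef, h, if_false, hΓbdef]
      exact Finset.mem_insert_of_mem (Finset.mem_erase.2 ⟨h, (hfp x).1⟩)
  -- main chain
  have key : ∫ x, ‖x - f x‖ ^ (2:ℕ) ∂μ ≤ ∫ x, ‖x - fb x‖ ^ (2:ℕ) ∂μ := by
    have e1 : ∫ x, ‖x - f x‖ ^ (2:ℕ) ∂μ = quantErrPow 2 Γ μ := by
      rw [quantErr_two]
      refine integral_congr_ae (Filter.Eventually.of_forall fun x => ?_)
      show ‖x - f x‖ ^ 2 = Metric.infDist x (Γ : Set (Ed d)) ^ 2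
      rw [(hfp x).2]
    have e2 : quantErrPow 2 Γ μ ≤ quantErrPow 2 Γb μ := hΓ.2.2 Γb hΓbne hΓbcard
    have e3 : quantErrPow 2 Γb μ ≤ ∫ x, ‖x - fb x‖ ^ (2:ℕ) ∂μ := by
      rw [quantErr_two]
      refine integral_mono_of_nonneg ?_ hIb ?_
      · filter_upwards with x; positivity
      · filter_upwards with x
        have h1 : Metric.infDist x (Γb : Set (Ed d)) ≤ ‖x - fb x‖ := by
          rw [show ‖x - fb x‖ = dist x (fb x) by rw [dist_eq_norm]]
          exact Metric.infDist_le_dist_of_mem (by exact_mod_cast hfbmem x)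
        exact pow_le_pow_left₀ Metric.infDist_nonneg h1 2
    linarith
  -- split over S and Sᶜ
  have split : ∀ (h : Ed d → Ed d), Integrable (fun x => ‖x - h x‖ ^ (2:ℕ)) μ →
      ∫ x, ‖x - h x‖ ^ (2:ℕ) ∂μ
        = ∫ x in S, ‖x - h x‖ ^ (2:ℕ) ∂μ + ∫ x in Sᶜ, ‖x - h x‖ ^ (2:ℕ) ∂μ := by
    intro h hh
    exact (integral_add_compl hS hh).symm
  have hfS : ∀ x ∈ S, f x = a := fun x hx => hx
  have keyS : ∫ x in S, ‖x - a‖ ^ (2:ℕ) ∂μ ≤ ∫ x in S, ‖x - b‖ ^ (2:ℕ) ∂μ := by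
    have c1 : ∫ x in S, ‖x - f x‖ ^ (2:ℕ) ∂μ = ∫ x in S, ‖x - a‖ ^ (2:ℕ) ∂μ :=
      setIntegral_congr_fun hS (fun x hx => by rw [hfS x hx])
    have c2 : ∫ x in S, ‖x - fb x‖ ^ (2:ℕ) ∂μ = ∫ x in S, ‖x - b‖ ^ (2:ℕ) ∂μ :=
      setIntegral_congr_fun hS (fun x hx => by simp [hfbdef, hfS x hx])
    have c3 : ∫ x in Sᶜ, ‖x - fb x‖ ^ (2:ℕ) ∂μ = ∫ x in Sᶜ, ‖x - f x‖ ^ (2:ℕ) ∂μ :=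
      setIntegral_congr_fun hS.compl (fun x hx => by
        have : f x ≠ a := hx
        simp [hfbdef, this])
    rw [split f hIf, split fb hIb, c1, c2, c3] at key
    linarith
  -- expand the square
  have expand : ∫ x in S, ‖x - b‖ ^ (2:ℕ) ∂μ
      = ∫ x in S, ‖x - a‖ ^ (2:ℕ) ∂μ - 2 * ‖v‖^2 + (μ S).toReal * ‖v‖^2 := by
    have e : ∀ x : Ed d, ‖x - b‖ ^ (2:ℕ)
        = ‖x - a‖ ^ (2:ℕ) - 2 * (inner ℝ v (x - a) : ℝ) + ‖v‖^2 := by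
      intro x
      have hxb : x - b = (x - a) - v := by rw [hbdef]; abel
      rw [hxb, norm_sub_sq_real, real_inner_comm]
    simp_rw [e]
    have i1 : IntegrableOn (fun x => ‖x - a‖ ^ (2:ℕ)) S μ :=
      (int_sq_sub hμ2 measurable_const (C := ‖a‖) (fun _ => le_refl _)).integrableOn
    have i2 : IntegrableOn (fun x => (inner ℝ v (x - a) : ℝ)) S μ :=
      (hint_sub.const_inner v).integrableOn
    have i3 : IntegrableOn (fun x => ‖x - a‖ ^ (2:ℕ) - 2 * (inner ℝ v (x - a) : ℝ)) S μ :=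
      i1.sub (i2.const_mul 2)
    have i4 : IntegrableOn (fun _ : Ed d => ‖v‖ ^ 2) S μ :=
      integrableOn_const (measure_ne_top _ _)
    have hinner : ∫ x in S, (inner ℝ v (x - a) : ℝ) ∂μ = ‖v‖ ^ 2 := by
      rw [integral_inner hint_sub.integrableOn v, ← hvdef, real_inner_self_eq_norm_sq]
    calc ∫ x in S, (‖x - a‖ ^ (2:ℕ) - 2 * (inner ℝ v (x - a) : ℝ) + ‖v‖ ^ 2) ∂μ
        = (∫ x in S, (‖x - a‖ ^ (2:ℕ) - 2 * (inner ℝ v (x - a) : ℝ)) ∂μ)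
            + ∫ _ in S, ‖v‖ ^ 2 ∂μ := integral_add i3 i4
      _ = (∫ x in S, ‖x - a‖ ^ (2:ℕ) ∂μ) - ∫ x in S, 2 * (inner ℝ v (x - a) : ℝ) ∂μ
            + ∫ _ in S, ‖v‖ ^ 2 ∂μ := by rw [integral_sub i1 (i2.const_mul 2)]
      _ = ∫ x in S, ‖x - a‖ ^ (2:ℕ) ∂μ - 2 * ‖v‖ ^ 2 + (μ S).toReal * ‖v‖ ^ 2 := by
          rw [integral_const_mul, hinner, setIntegral_const, smul_eq_mul, measureReal_def]
  have hm1 : (μ S).toReal ≤ 1 := by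
    have h := ENNReal.toReal_mono ENNReal.one_ne_top (prob_le_one (μ := μ) (s := S))
    simpa using h
  have hv2 : ‖v‖^2 ≤ 0 := by
    rw [expand] at keyS
    nlinarith [sq_nonneg ‖v‖, ENNReal.toReal_nonneg (a := μ S)]
  have hv0 : ‖v‖ ^ 2 = 0 := le_antisymm hv2 (sq_nonneg _)
  exact norm_eq_zero.1 (sq_eq_zero_iff.1 hv0)

lemma int_f {d : ℕ} {μ : Measure (Ed d)} [IsProbabilityMeasure μ]
    {f : Ed d → Ed d} (hfm : Measurable f) {C : ℝ} (hC : ∀ x, ‖f x‖ ≤ C) :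
    Integrable f μ :=
  Integrable.mono' (integrable_const C) hfm.aestronglyMeasurable
    (Filter.Eventually.of_forall hC)

lemma stationaryA {d N : ℕ} {μ : Measure (Ed d)} [IsProbabilityMeasure μ]
    (hμ2 : Integrable (fun x => ‖x‖ ^ (2 : ℝ)) μ)
    {Γ : Finset (Ed d)} (hΓ : IsOptimalQuantizer 2 N Γ μ)
    {f : Ed d → Ed d} (hf : IsNearestProj Γ f) {A : Set (Ed d)}
    (hA : MeasurableSet A) :
    ∫ x in f ⁻¹' A, (x - f x) ∂μ = 0 := by
  classical
  obtain ⟨hfm, hfp⟩ := hf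
  have hC : ∀ x, ‖f x‖ ≤ Γ.sup' hΓ.1 fun c => ‖c‖ :=
    fun x => Finset.le_sup' (fun c => ‖c‖) (hfp x).1
  have hfint : Integrable f μ := int_f hfm hC
  have hint : Integrable (fun x => x - f x) μ := (int_id hμ2).sub hfint
  have hpre : f ⁻¹' A = ⋃ a ∈ Γ.filter (· ∈ A), f ⁻¹' {a} := by
    ext x
    simp only [mem_preimage, mem_iUnion, Finset.mem_filter, mem_singleton_iff]
    constructor
    · intro hx; exact ⟨f x, ⟨⟨(hfp x).1, hx⟩, rfl⟩⟩
    · rintro ⟨a, ⟨⟨_, haA⟩, hfa⟩⟩; rw [hfa]; exact haA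
  rw [hpre, integral_biUnion_finset _
      (fun a _ => hfm (measurableSet_singleton a))
      (fun a _ b _ hab => Set.disjoint_left.2 fun x hxa hxb => hab (by
        have h1 : f x = a := hxa
        have h2 : f x = b := hxb
        rw [← h1, h2]))
      (fun a _ => hint.integrableOn)]
  refine Finset.sum_eq_zero fun a haA => ?_
  have ha : a ∈ Γ := (Finset.mem_filter.1 haA).1
  have := stationary hμ2 hΓ ⟨hfm, hfp⟩ a ha
  calc ∫ x in f ⁻¹' {a}, (x - f x) ∂μ = ∫ x in f ⁻¹' {a}, (x - a) ∂μ :=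
        setIntegral_congr_fun (hfm (measurableSet_singleton a))
          (fun x hx => by rw [show f x = a from hx])
    _ = 0 := this


theorem stmt18 (d N K : ℕ) (μ ν : Measure (Ed d))
    [IsProbabilityMeasure μ] [IsProbabilityMeasure ν]
    (hμ2 : Integrable (fun x => ‖x‖ ^ (2 : ℝ)) μ)
    (hcvx : ConvexOrder μ ν)
    (hνc : ∃ Kc : Set (Ed d), IsCompact Kc ∧ ν Kcᶜ = 0)
    (Γ : Finset (Ed d)) (hΓ : IsOptimalQuantizer 2 N Γ μ)
    (f : Ed d → Ed d) (hf : IsNearestProj Γ f)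
    (Γ' : Finset (Ed d)) (hΓ'card : Γ'.card ≤ K)
    (g : Ed d → ℝ → Ed d) (hgmeas : Measurable fun q : Ed d × ℝ => g q.1 q.2)
    (hgrange : ∀ y u, g y u ∈ Γ')
    (hgstat : ∀ y ∈ convexHull ℝ (Γ' : Set (Ed d)), ∫ u in Icc (0:ℝ) 1, g y u = y)
    (hνsupp : ν ((convexHull ℝ (Γ' : Set (Ed d)))ᶜ) = 0)
    (π : Measure (Ed d × Ed d)) (hπ : IsMartingaleCoupling π μ ν) :
    IsMartingaleCoupling
      ((π.prod (volume.restrict (Icc (0:ℝ) 1))).map fun q => (f q.1.1, g q.1.2 q.2))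
      (μ.map f)
      ((ν.prod (volume.restrict (Icc (0:ℝ) 1))).map fun q => g q.1 q.2) := by
  classical
  obtain ⟨hπp, ⟨hπ1, hπ2⟩, hπmart⟩ := hπ
  haveI := hπp
  obtain ⟨hfm, hfp⟩ := hf
  set lam01 : Measure ℝ := volume.restrict (Icc (0:ℝ) 1) with hlamdef
  haveI : IsProbabilityMeasure lam01 := ⟨by simp [hlamdef, Real.volume_Icc]⟩
  set ρ : Measure ((Ed d × Ed d) × ℝ) := π.prod lam01 with hρdef
  set h : (Ed d × Ed d) × ℝ → Ed d × Ed d := fun q => (f q.1.1, g q.1.2 q.2) with hhdef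
  have hm : Measurable h := ((hfm.comp (measurable_fst.comp measurable_fst)).prodMk
    (hgmeas.comp ((measurable_snd.comp measurable_fst).prodMk measurable_snd)))
  have hΓ'ne : Γ'.Nonempty := ⟨g 0 0, hgrange 0 0⟩
  set C : ℝ := Γ.sup' hΓ.1 fun c => ‖c‖ with hCdef
  set C' : ℝ := Γ'.sup' hΓ'ne fun c => ‖c‖ with hC'def
  have hfC : ∀ x, ‖f x‖ ≤ C := fun x => Finset.le_sup' (fun c => ‖c‖) (hfp x).1
  have hgC : ∀ y u, ‖g y u‖ ≤ C' := fun y u => Finset.le_sup' (fun c => ‖c‖) (hgrange y u)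
  refine ⟨?_, ⟨?_, ?_⟩, ?_⟩
  · exact Measure.isProbabilityMeasure_map hm.aemeasurable
  · -- first marginal
    have hρfst : ρ.map Prod.fst = π := by
      rw [hρdef, Measure.map_fst_prod]; simp
    calc (ρ.map h).map Prod.fst
        = ρ.map (Prod.fst ∘ h) := Measure.map_map measurable_fst hm
      _ = ρ.map (f ∘ (Prod.fst ∘ Prod.fst)) := rfl
      _ = (ρ.map (Prod.fst ∘ Prod.fst)).map f :=
          (Measure.map_map hfm (measurable_fst.comp measurable_fst)).symm
      _ = ((ρ.map Prod.fst).map Prod.fst).map f := by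
          rw [Measure.map_map measurable_fst measurable_fst]
      _ = μ.map f := by rw [hρfst, hπ1]
  · -- second marginal
    have hρF : ρ.map (Prod.map Prod.snd (id : ℝ → ℝ)) = ν.prod lam01 := by
      rw [hρdef, ← Measure.map_prod_map _ _ measurable_snd measurable_id, hπ2,
        Measure.map_id]
    calc (ρ.map h).map Prod.snd
        = ρ.map (Prod.snd ∘ h) := Measure.map_map measurable_snd hm
      _ = ρ.map ((fun p : Ed d × ℝ => g p.1 p.2) ∘ Prod.map Prod.snd (id : ℝ → ℝ)) := rfl
      _ = (ρ.map (Prod.map Prod.snd (id : ℝ → ℝ))).map (fun p : Ed d × ℝ => g p.1 p.2) :=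
          (Measure.map_map hgmeas (measurable_snd.prodMap measurable_id)).symm
      _ = (ν.prod lam01).map (fun p : Ed d × ℝ => g p.1 p.2) := by rw [hρF]
  · -- martingale property
    intro A hA
    set B : Set (Ed d × Ed d) := (f ∘ Prod.fst) ⁻¹' A with hBdef
    have hBmeas : MeasurableSet B := (hfm.comp measurable_fst) hA
    rw [setIntegral_map (f := fun q : Ed d × Ed d => q.2 - q.1) (hA.prod MeasurableSet.univ)
      (measurable_snd.sub measurable_fst).aestronglyMeasurable hm.aemeasurable]
    have hpre : h ⁻¹' (A ×ˢ univ) = B ×ˢ (univ : Set ℝ) := by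
      ext q
      simp [hhdef, hBdef, Set.mem_prod]
    rw [hpre]
    have hInt : Integrable (fun q : (Ed d × Ed d) × ℝ => (h q).2 - (h q).1) ρ := by
      refine Integrable.mono' (integrable_const (C' + C)) ?_ ?_
      · exact ((hgmeas.comp ((measurable_snd.comp measurable_fst).prodMk
          measurable_snd)).sub (hfm.comp (measurable_fst.comp measurable_fst))).aestronglyMeasurable
      · filter_upwards with q
        exact (norm_sub_le _ _).trans (add_le_add (hgC _ _) (hfC _))
    rw [setIntegral_prod _ hInt.integrableOn]
    simp only [Measure.restrict_univ]
    have hCv : IsClosed (convexHull ℝ (Γ' : Set (Ed d))) :=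
      (Set.Finite.isCompact_convexHull ℝ Γ'.finite_toSet).isClosed
    have hae : ∀ᵐ p ∂π, p.2 ∈ convexHull ℝ (Γ' : Set (Ed d)) := by
      rw [ae_iff]
      have hs : {p : Ed d × Ed d | ¬ p.2 ∈ convexHull ℝ (Γ' : Set (Ed d))}
          = Prod.snd ⁻¹' (convexHull ℝ (Γ' : Set (Ed d)))ᶜ := rfl
      rw [hs, ← Measure.map_apply measurable_snd hCv.measurableSet.compl, hπ2]
      exact hνsupp
    have hgIu : ∀ y : Ed d, Integrable (fun u => g y u) lam01 := by
      intro y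
      refine Integrable.mono' (integrable_const C')
        ((hgmeas.comp (measurable_const.prodMk measurable_id)).aestronglyMeasurable)
        (Filter.Eventually.of_forall fun u => hgC y u)
    have hcongr : ∫ p in B, (∫ u, ((h (p, u)).2 - (h (p, u)).1) ∂lam01) ∂π
        = ∫ p in B, (p.2 - f p.1) ∂π := by
      refine setIntegral_congr_ae hBmeas ?_
      filter_upwards [hae] with p hp _
      show ∫ u, (g p.2 u - f p.1) ∂lam01 = p.2 - f p.1
      rw [integral_sub (hgIu p.2) (integrable_const _), integral_const]
      simp only [measureReal_def, measure_univ, ENNReal.toReal_one, one_smul]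
      rw [hgstat p.2 hp]
    rw [hcongr]
    -- integrability of coordinates w.r.t. π
    have hintπ1 : Integrable (fun p : Ed d × Ed d => p.1) π := by
      have h0 : Integrable (fun x : Ed d => x) (π.map Prod.fst) := by
        rw [hπ1]; exact int_id hμ2
      exact (integrable_map_measure measurable_id.aestronglyMeasurable
        measurable_fst.aemeasurable).1 h0
    have hintπ2 : Integrable (fun p : Ed d × Ed d => p.2) π := by
      obtain ⟨R, hR⟩ := ((Set.Finite.isCompact_convexHull ℝ
        Γ'.finite_toSet).isBounded).subset_closedBall 0
      refine Integrable.mono' (integrable_const R) measurable_snd.aestronglyMeasurable ?_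
      filter_upwards [hae] with p hp
      simpa using hR hp
    have hintπf : Integrable (fun p : Ed d × Ed d => f p.1) π :=
      Integrable.mono' (integrable_const C)
        ((hfm.comp measurable_fst).aestronglyMeasurable)
        (Filter.Eventually.of_forall fun p => hfC p.1)
    have hsplit : ∫ p in B, (p.2 - f p.1) ∂π
        = (∫ p in B, (p.2 - p.1) ∂π) + ∫ p in B, (p.1 - f p.1) ∂π := by
      have i1 : Integrable (fun p : Ed d × Ed d => p.2 - p.1) π := hintπ2.sub hintπ1
      have i2 : Integrable (fun p : Ed d × Ed d => p.1 - f p.1) π := hintπ1.sub hintπf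
      rw [← integral_add i1.integrableOn i2.integrableOn]
      refine setIntegral_congr_fun hBmeas fun p _ => ?_
      abel
    have hmart0 : ∫ p in B, (p.2 - p.1) ∂π = 0 := by
      have hBeq : B = (f ⁻¹' A) ×ˢ (univ : Set (Ed d)) := by
        ext p
        simp [hBdef, Set.mem_prod]
      rw [hBeq]
      exact hπmart (f ⁻¹' A) (hfm hA)
    have hstat0 : ∫ p in B, (p.1 - f p.1) ∂π = 0 := by
      have h2 : ∫ x in f ⁻¹' A, (x - f x) ∂(π.map Prod.fst)
          = ∫ p in Prod.fst ⁻¹' (f ⁻¹' A), (p.1 - f p.1) ∂π :=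
        setIntegral_map (hfm hA) ((measurable_id.sub hfm).aestronglyMeasurable)
          measurable_fst.aemeasurable
      rw [hπ1, stationaryA hμ2 hΓ ⟨hfm, hfp⟩ hA] at h2
      have hBeq : B = Prod.fst ⁻¹' (f ⁻¹' A) := rfl
      rw [hBeq, ← h2]
    rw [hsplit, hmart0, hstat0, add_zero]
end
end

section
/- In the setting of quantized approximation of martingale couplings with 1 ≤ p ≤ 2: for μ ≤_cvx ν on ℝ^d with ν compactly supported, π ∈ M(μ,ν), μ̂^N a quadratic optimal primal N-quantization of μ and ν̌^K an L^p-optimal dual K-quantization of ν, the coupling π̄^{N,K} built by composing the nearest-neighbour projection and the splitting operator satisfies W_p^p(π̄^{N,K}, π) ≤ e^p_{2,N}(μ) + d^p_{p,K}(ν), where W_p is the Wasserstein distance on P(ℝ^d × ℝ^d). -/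
open MeasureTheory Set

noncomputable section

variable {E : Type*} [NormedAddCommGroup E] [NormedSpace ℝ E] [MeasurableSpace E] [BorelSpace E]

lemma aux_rpow_add_le (a b r : ℝ) (ha : 0 ≤ a) (hb : 0 ≤ b) (hr0 : 0 ≤ r) (hr1 : r ≤ 1) :
    (a + b) ^ r ≤ a ^ r + b ^ r := by
  lift a to NNReal using ha
  lift b to NNReal using hb
  exact_mod_cast NNReal.rpow_add_le_add_rpow a b hr0 hr1

lemma aux_rpow_le_one_add_sq (t p : ℝ) (ht : 0 ≤ t) (hp0 : 0 ≤ p) (hp2 : p ≤ 2) :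
    t ^ p ≤ 1 + t ^ (2 : ℝ) := by
  rcases le_or_gt t 1 with h | h
  · have : t ^ p ≤ 1 := Real.rpow_le_one ht h hp0
    have h2 : 0 ≤ t ^ (2:ℝ) := Real.rpow_nonneg ht _
    linarith
  · have : t ^ p ≤ t ^ (2:ℝ) := Real.rpow_le_rpow_of_exponent_le h.le hp2
    linarith

lemma aux_jensen_rpow {α : Type*} [MeasurableSpace α] (μ : Measure α) [IsProbabilityMeasure μ]
    (h : α → ℝ) (r : ℝ) (hr0 : 0 ≤ r) (hr1 : r ≤ 1) (hh0 : ∀ x, 0 ≤ h x)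
    (hhi : Integrable h μ) (hhri : Integrable (fun x => h x ^ r) μ) :
    ∫ x, h x ^ r ∂μ ≤ (∫ x, h x ∂μ) ^ r :=
  (Real.concaveOn_rpow hr0 hr1).le_map_integral
    (ContinuousOn.rpow_const continuousOn_id (fun x _ => Or.inr hr0)) isClosed_Ici
    (Filter.Eventually.of_forall hh0) hhi hhri

lemma aux_rpow_two (x : ℝ) : x ^ (2:ℝ) = x ^ 2 := by
  rw [show (2:ℝ) = ((2:ℕ):ℝ) by norm_num, Real.rpow_natCast]

theorem stmt19 (d N K : ℕ) (p : ℝ) (hp1 : 1 ≤ p) (hp2 : p ≤ 2)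
    (μ ν : Measure (Ed d)) [IsProbabilityMeasure μ] [IsProbabilityMeasure ν]
    (hμ2 : Integrable (fun x => ‖x‖ ^ (2 : ℝ)) μ)
    (hcvx : ConvexOrder μ ν)
    (hνc : ∃ Kc : Set (Ed d), IsCompact Kc ∧ ν Kcᶜ = 0)
    (Γ : Finset (Ed d)) (hΓ : IsOptimalQuantizer 2 N Γ μ)
    (f : Ed d → Ed d) (hf : IsNearestProj Γ f)
    -- `f` realizes the optimal quadratic primal quantization error `e_{2,N}(μ)²`
    (hfopt : ∫ x, ‖x - f x‖ ^ (2 : ℝ) ∂μ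
      = sInf {c | ∃ Γ₂ : Finset (Ed d), Γ₂.Nonempty ∧ Γ₂.card ≤ N ∧
          c = quantErrPow 2 Γ₂ μ})
    (Γ' : Finset (Ed d)) (hΓ'card : Γ'.card ≤ K)
    (g : Ed d → ℝ → Ed d) (hgmeas : Measurable fun q : Ed d × ℝ => g q.1 q.2)
    (hgrange : ∀ y u, g y u ∈ Γ')
    (hgstat : ∀ y ∈ convexHull ℝ (Γ' : Set (Ed d)), ∫ u in Icc (0:ℝ) 1, g y u = y)
    (hνsupp : ν ((convexHull ℝ (Γ' : Set (Ed d)))ᶜ) = 0)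
    -- `g` realizes the optimal `L^p` dual quantization error `d_{p,K}(ν)^p`
    (hgopt : ∫ q, ‖q.1 - g q.1 q.2‖ ^ p ∂(ν.prod (volume.restrict (Icc (0:ℝ) 1)))
      = sInf {c | ∃ ν' : Measure (Ed d), IsProbabilityMeasure ν' ∧ SuppLE K ν' ∧
          ConvexOrder ν ν' ∧
          ∃ π' : Measure (Ed d × Ed d), IsMartingaleCoupling π' ν ν' ∧ c = pCost p π'})
    (π : Measure (Ed d × Ed d)) (hπ : IsMartingaleCoupling π μ ν) :
    sInf {c | ∃ ρ : Measure ((Ed d × Ed d) × (Ed d × Ed d)), IsProbabilityMeasure ρ ∧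
        ρ.map Prod.fst
          = (π.prod (volume.restrict (Icc (0:ℝ) 1))).map (fun q => (f q.1.1, g q.1.2 q.2)) ∧
        ρ.map Prod.snd = π ∧
        c = ∫ q, (‖q.1.1 - q.2.1‖ ^ (2 : ℝ) + ‖q.1.2 - q.2.2‖ ^ (2 : ℝ)) ^ (p / 2) ∂ρ}
      ≤ (∫ x, ‖x - f x‖ ^ (2 : ℝ) ∂μ) ^ (p / 2)
        + ∫ q, ‖q.1 - g q.1 q.2‖ ^ p ∂(ν.prod (volume.restrict (Icc (0:ℝ) 1))) := by
  classical
  set lam : Measure ℝ := volume.restrict (Icc (0:ℝ) 1) with hlam_def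
  haveI hlamP : IsProbabilityMeasure lam := by
    constructor
    simp [hlam_def, Real.volume_Icc]
  haveI hπP : IsProbabilityMeasure π := hπ.1
  obtain ⟨hfm, hfprop⟩ := hf
  have hp0' : (0:ℝ) ≤ p := by linarith
  have hp0 : (0:ℝ) ≤ p := hp0'
  have hπ1 : π.map Prod.fst = μ := hπ.2.1.1
  have hπ2 : π.map Prod.snd = ν := hπ.2.1.2
  set Pm : Measure ((Ed d × Ed d) × ℝ) := π.prod lam with hPm_def
  haveI : IsProbabilityMeasure Pm := by infer_instance
  -- the transport map
  set T : (Ed d × Ed d) × ℝ → (Ed d × Ed d) × (Ed d × Ed d) :=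
    fun q => ((f q.1.1, g q.1.2 q.2), q.1) with hT_def
  have hrp : Measurable (fun t : ℝ => t ^ p) := (Real.continuous_rpow_const hp0').measurable
  have hrp2 : Measurable (fun t : ℝ => t ^ (2:ℝ)) :=
    (Real.continuous_rpow_const (by norm_num)).measurable
  have hrph : Measurable (fun t : ℝ => t ^ (p/2)) :=
    (Real.continuous_rpow_const (by linarith)).measurable
  have hTm : Measurable T :=
    ((hfm.comp (measurable_fst.comp measurable_fst)).prodMk
      (hgmeas.comp ((measurable_snd.comp measurable_fst).prodMk measurable_snd))).prodMk
      measurable_fst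
  set ρ : Measure ((Ed d × Ed d) × (Ed d × Ed d)) := Pm.map T with hρ_def
  -- the cost function
  set F : (Ed d × Ed d) × (Ed d × Ed d) → ℝ :=
    fun q => (‖q.1.1 - q.2.1‖ ^ (2 : ℝ) + ‖q.1.2 - q.2.2‖ ^ (2 : ℝ)) ^ (p / 2) with hF_def
  have hFm : Measurable F :=
    hrph.comp (((hrp2.comp (((measurable_fst.comp measurable_fst).sub
        (measurable_fst.comp measurable_snd)).norm))).add
      ((hrp2.comp (((measurable_snd.comp measurable_fst).sub
        (measurable_snd.comp measurable_snd)).norm))))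
  -- marginal identities
  have hmapfst : Pm.map Prod.fst = π := by
    rw [hPm_def, Measure.map_fst_prod]
    simp
  have hmap11 : Pm.map (fun q : (Ed d × Ed d) × ℝ => q.1.1) = μ := by
    have : (fun q : (Ed d × Ed d) × ℝ => q.1.1)
        = Prod.fst ∘ (Prod.fst : (Ed d × Ed d) × ℝ → Ed d × Ed d) := rfl
    rw [this, ← Measure.map_map measurable_fst measurable_fst, hmapfst, hπ1]
  have hmap12 : Pm.map (fun q : (Ed d × Ed d) × ℝ => q.1.2) = ν := by
    have : (fun q : (Ed d × Ed d) × ℝ => q.1.2)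
        = Prod.snd ∘ (Prod.fst : (Ed d × Ed d) × ℝ → Ed d × Ed d) := rfl
    rw [this, ← Measure.map_map measurable_snd measurable_fst, hmapfst, hπ2]
  have hmapνlam : Pm.map (fun q : (Ed d × Ed d) × ℝ => (q.1.2, q.2)) = ν.prod lam := by
    have h1 : (fun q : (Ed d × Ed d) × ℝ => (q.1.2, q.2))
        = Prod.map (Prod.snd : Ed d × Ed d → Ed d) (id : ℝ → ℝ) := rfl
    rw [h1, ← Measure.map_prod_map _ _ measurable_snd measurable_id, hπ2, Measure.map_id]
  -- bound on Γ
  obtain ⟨hΓne, -, -⟩ := hΓ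
  set C : ℝ := Γ.sup' hΓne (fun x => ‖x‖) with hC_def
  have hCB : ∀ x ∈ Γ, ‖x‖ ≤ C := fun x hx => Finset.le_sup' _ hx
  have hfx : ∀ x : Ed d, ‖x - f x‖ ≤ ‖x‖ + C := by
    intro x
    calc ‖x - f x‖ ≤ ‖x‖ + ‖f x‖ := norm_sub_le _ _
    _ ≤ ‖x‖ + C := by
        have := hCB (f x) (hfprop x).1
        linarith
  -- integrability of the dominating function wrt μ
  have hnorm_int : Integrable (fun x : Ed d => ‖x‖) μ := by
    refine Integrable.mono' ((integrable_const (1:ℝ)).add hμ2)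
      measurable_norm.aestronglyMeasurable ?_
    refine Filter.Eventually.of_forall (fun x => ?_)
    rw [Real.norm_eq_abs, abs_of_nonneg (norm_nonneg x)]
    have := aux_rpow_le_one_add_sq ‖x‖ 1 (norm_nonneg x) zero_le_one one_le_two
    simpa using this
  have hG_int : Integrable (fun x : Ed d => 1 + (‖x‖ + C) ^ (2:ℝ)) μ := by
    have hexp : (fun x : Ed d => 1 + (‖x‖ + C) ^ (2:ℝ))
        = fun x : Ed d => (1 + C^2 + 2*C*‖x‖) + ‖x‖ ^ (2:ℝ) := by
      funext x
      rw [aux_rpow_two, aux_rpow_two]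
      ring
    rw [hexp]
    exact (((integrable_const _).add ((hnorm_int.const_mul _))).add hμ2)
  have hμ2f : Integrable (fun x : Ed d => ‖x - f x‖ ^ (2:ℝ)) μ := by
    refine Integrable.mono' hG_int
      (hrp2.comp (measurable_id.sub hfm).norm).aestronglyMeasurable ?_
    refine Filter.Eventually.of_forall (fun x => ?_)
    rw [Real.norm_eq_abs, abs_of_nonneg (Real.rpow_nonneg (norm_nonneg _) _)]
    have h1 : ‖x - f x‖ ^ (2:ℝ) ≤ (‖x‖ + C) ^ (2:ℝ) :=
      Real.rpow_le_rpow (norm_nonneg _) (hfx x) (by norm_num)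
    linarith
  have hμpf : Integrable (fun x : Ed d => ‖x - f x‖ ^ p) μ := by
    refine Integrable.mono' hG_int
      (hrp.comp (measurable_id.sub hfm).norm).aestronglyMeasurable ?_
    refine Filter.Eventually.of_forall (fun x => ?_)
    rw [Real.norm_eq_abs, abs_of_nonneg (Real.rpow_nonneg (norm_nonneg _) _)]
    have hxC : (0:ℝ) ≤ ‖x‖ + C := le_trans (norm_nonneg (x - f x)) (hfx x)
    calc ‖x - f x‖ ^ p ≤ (‖x‖ + C) ^ p := Real.rpow_le_rpow (norm_nonneg _) (hfx x) hp0
    _ ≤ 1 + (‖x‖ + C) ^ (2:ℝ) := aux_rpow_le_one_add_sq _ p hxC hp0 hp2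
  -- Jensen step
  have hJensen : ∫ x, ‖x - f x‖ ^ p ∂μ ≤ (∫ x, ‖x - f x‖ ^ (2:ℝ) ∂μ) ^ (p/2) := by
    have hkey : ∀ x : Ed d, (‖x - f x‖ ^ (2:ℝ)) ^ (p/2) = ‖x - f x‖ ^ p := by
      intro x
      rw [← Real.rpow_mul (norm_nonneg _), show (2:ℝ) * (p/2) = p by ring]
    have := aux_jensen_rpow μ (fun x => ‖x - f x‖ ^ (2:ℝ)) (p/2)
      (by linarith) (by linarith)
      (fun x => Real.rpow_nonneg (norm_nonneg _) _) hμ2f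
      (by simpa only [hkey] using hμpf)
    simpa only [hkey] using this
  -- bound on Γ' and its convex hull
  have hΓ'ne : Γ'.Nonempty := ⟨g 0 0, hgrange 0 0⟩
  set C' : ℝ := Γ'.sup' hΓ'ne (fun x => ‖x‖) with hC'_def
  have hC'B : ∀ x ∈ Γ', ‖x‖ ≤ C' := fun x hx => Finset.le_sup' _ hx
  set S : Set (Ed d) := convexHull ℝ (Γ' : Set (Ed d)) with hS_def
  have hSsub : S ⊆ Metric.closedBall 0 C' := by
    apply convexHull_min
    · intro x hx
      simp only [Metric.mem_closedBall, dist_zero_right]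
      exact hC'B x hx
    · exact convex_closedBall _ _
  have hSmeas : MeasurableSet S :=
    ((Γ'.finite_toSet.isCompact_convexHull ℝ).isClosed).measurableSet
  -- a.e. the second coordinate lies in S
  have haeS : ∀ᵐ q ∂Pm, q.1.2 ∈ S := by
    have hmeas2 : Measurable (fun q : (Ed d × Ed d) × ℝ => q.1.2) :=
      measurable_snd.comp measurable_fst
    have : Pm ((fun q : (Ed d × Ed d) × ℝ => q.1.2) ⁻¹' Sᶜ) = 0 := by
      rw [← Measure.map_apply hmeas2 hSmeas.compl, hmap12]
      exact hνsupp
    rw [ae_iff]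
    convert this using 2
    rfl
  -- the two integrand pieces
  set A : (Ed d × Ed d) × ℝ → ℝ := fun q => ‖q.1.1 - f q.1.1‖ ^ p with hA_def
  set B : (Ed d × Ed d) × ℝ → ℝ := fun q => ‖q.1.2 - g q.1.2 q.2‖ ^ p with hB_def
  have hAm : Measurable A :=
    hrp.comp (((measurable_fst.comp measurable_fst).sub
      (hfm.comp (measurable_fst.comp measurable_fst))).norm)
  have hgq : Measurable (fun q : (Ed d × Ed d) × ℝ => g q.1.2 q.2) :=
    hgmeas.comp ((measurable_snd.comp measurable_fst).prodMk measurable_snd)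
  have hBm : Measurable B :=
    hrp.comp (((measurable_snd.comp measurable_fst).sub hgq).norm)
  have hAint : Integrable A Pm := by
    rw [hA_def]
    have := (integrable_map_measure
      (f := fun q : (Ed d × Ed d) × ℝ => q.1.1)
      (g := fun x : Ed d => ‖x - f x‖ ^ p)
      (by rw [hmap11]; exact (hrp.comp (measurable_id.sub hfm).norm).aestronglyMeasurable)
      (measurable_fst.comp measurable_fst).aemeasurable).mp (by rwa [hmap11])
    exact this
  have hBint : Integrable B Pm := by
    refine Integrable.mono' (integrable_const ((C' + C') ^ p)) hBm.aestronglyMeasurable ?_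
    filter_upwards [haeS] with q hq
    rw [Real.norm_eq_abs, abs_of_nonneg (Real.rpow_nonneg (norm_nonneg _) _)]
    refine Real.rpow_le_rpow (norm_nonneg _) ?_ hp0
    calc ‖q.1.2 - g q.1.2 q.2‖ ≤ ‖q.1.2‖ + ‖g q.1.2 q.2‖ := norm_sub_le _ _
    _ ≤ C' + C' := by
        have h1 : ‖q.1.2‖ ≤ C' := by
          have := hSsub hq
          simpa [Metric.mem_closedBall, dist_zero_right] using this
        have h2 := hC'B _ (hgrange q.1.2 q.2)
        linarith
  -- integral identities
  have hIA : ∫ q, A q ∂Pm = ∫ x, ‖x - f x‖ ^ p ∂μ := by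
    rw [hA_def, ← hmap11]
    rw [integral_map (φ := fun q : (Ed d × Ed d) × ℝ => q.1.1) (measurable_fst.comp measurable_fst).aemeasurable
      (by rw [hmap11]; exact (hrp.comp (measurable_id.sub hfm).norm).aestronglyMeasurable)]
  have hIB : ∫ q, B q ∂Pm = ∫ q, ‖q.1 - g q.1 q.2‖ ^ p ∂(ν.prod lam) := by
    rw [hB_def, ← hmapνlam]
    rw [integral_map (φ := fun q : (Ed d × Ed d) × ℝ => (q.1.2, q.2)) ((measurable_snd.comp measurable_fst).prodMk measurable_snd).aemeasurable
      (by rw [hmapνlam]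
          exact (hrp.comp ((measurable_fst.sub hgmeas).norm)).aestronglyMeasurable)]
  -- properties of ρ
  haveI hρP : IsProbabilityMeasure ρ := Measure.isProbabilityMeasure_map hTm.aemeasurable
  have hρ1 : ρ.map Prod.fst = Pm.map (fun q => (f q.1.1, g q.1.2 q.2)) := by
    rw [hρ_def, Measure.map_map measurable_fst hTm]
    rfl
  have hρ2 : ρ.map Prod.snd = π := by
    rw [hρ_def, Measure.map_map measurable_snd hTm]
    have : (Prod.snd ∘ T) = (Prod.fst : (Ed d × Ed d) × ℝ → Ed d × Ed d) := rfl
    rw [this, hmapfst]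
  -- the cost of ρ
  have hcost : ∫ q, F q ∂ρ ≤ (∫ x, ‖x - f x‖ ^ (2:ℝ) ∂μ) ^ (p/2)
      + ∫ q, ‖q.1 - g q.1 q.2‖ ^ p ∂(ν.prod lam) := by
    have h1 : ∫ q, F q ∂ρ = ∫ q, F (T q) ∂Pm := by
      rw [hρ_def, integral_map hTm.aemeasurable hFm.aestronglyMeasurable]
    have h2 : ∫ q, F (T q) ∂Pm ≤ ∫ q, (A q + B q) ∂Pm := by
      refine integral_mono_of_nonneg (Filter.Eventually.of_forall (fun q => ?_))
        (hAint.add hBint) (Filter.Eventually.of_forall (fun q => ?_))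
      · exact Real.rpow_nonneg (add_nonneg (Real.rpow_nonneg (norm_nonneg _) _)
          (Real.rpow_nonneg (norm_nonneg _) _)) _
      · show (‖f q.1.1 - q.1.1‖ ^ (2:ℝ) + ‖g q.1.2 q.2 - q.1.2‖ ^ (2:ℝ)) ^ (p/2)
          ≤ A q + B q
        have hkA : (‖f q.1.1 - q.1.1‖ ^ (2:ℝ)) ^ (p/2) = A q := by
          rw [← Real.rpow_mul (norm_nonneg _), show (2:ℝ) * (p/2) = p by ring,
            norm_sub_rev]
        have hkB : (‖g q.1.2 q.2 - q.1.2‖ ^ (2:ℝ)) ^ (p/2) = B q := by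
          rw [← Real.rpow_mul (norm_nonneg _), show (2:ℝ) * (p/2) = p by ring,
            norm_sub_rev]
        calc (‖f q.1.1 - q.1.1‖ ^ (2:ℝ) + ‖g q.1.2 q.2 - q.1.2‖ ^ (2:ℝ)) ^ (p/2)
            ≤ (‖f q.1.1 - q.1.1‖ ^ (2:ℝ)) ^ (p/2) + (‖g q.1.2 q.2 - q.1.2‖ ^ (2:ℝ)) ^ (p/2) :=
              aux_rpow_add_le _ _ _ (Real.rpow_nonneg (norm_nonneg _) _)
                (Real.rpow_nonneg (norm_nonneg _) _) (by linarith) (by linarith)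
        _ = A q + B q := by rw [hkA, hkB]
    have h3 : ∫ q, (A q + B q) ∂Pm = ∫ q, A q ∂Pm + ∫ q, B q ∂Pm :=
      integral_add hAint hBint
    calc ∫ q, F q ∂ρ ≤ ∫ q, A q ∂Pm + ∫ q, B q ∂Pm := by rw [h1, ← h3]; exact h2
    _ ≤ (∫ x, ‖x - f x‖ ^ (2:ℝ) ∂μ) ^ (p/2) + ∫ q, ‖q.1 - g q.1 q.2‖ ^ p ∂(ν.prod lam) := by
        rw [hIA, hIB]
        exact add_le_add_left hJensen _
  -- conclude via csInf_le
  refine le_trans (csInf_le ?_ ?_) hcost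
  · refine ⟨0, fun c hc => ?_⟩
    obtain ⟨ρ', -, -, -, rfl⟩ := hc
    exact integral_nonneg (fun q => Real.rpow_nonneg (add_nonneg
      (Real.rpow_nonneg (norm_nonneg _) _) (Real.rpow_nonneg (norm_nonneg _) _)) _)
  · exact ⟨ρ, hρP, hρ1, hρ2, rfl⟩
end
end
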